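/- arXiv:1412.3987 — 6 statements merged into one kernel-verified Lean document; each statement's English description precedes it below -/
import Mathlib

section
/- Let P ⊆ ℝ^d be a polytope having the origin 0 as a vertex, and let D be a finite set of nonzero vectors such that every edge direction of P is a positive scalar multiple of some element of D. For each e ∈ D set t*(e) = sup{t ≥ 0 : t·e ∈ P}, and let V_cone = {t*(e)·e : e ∈ D, t*(e) > 0}. Assume that every q ∈ V_cone has last coordinate q_d ≥ 1. Then for every w ∈ ℝ^d with w ≠ 0: the segment [0,w] is an edge of P if and only if w ∈ V_cone and (1/w_d)·w is an extreme point of the set cone(V_cone) ∩ {x ∈ ℝ^d : x_d = 1}. -/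
open scoped BigOperators

/-- A polytope in `ℝ^d`: the convex hull of a nonempty finite set of points. -/
def IsPolytope {d : ℕ} (P : Set (EuclideanSpace ℝ (Fin d))) : Prop :=
  ∃ S : Finset (EuclideanSpace ℝ (Fin d)), S.Nonempty ∧ P = convexHull ℝ (S : Set (EuclideanSpace ℝ (Fin d)))

/-- The segment `[v,w]` with `v ≠ w` is an edge of `P`, i.e. a face of `P`
(faces are extreme subsets). -/
def IsEdge {d : ℕ} (P : Set (EuclideanSpace ℝ (Fin d)))
    (v w : EuclideanSpace ℝ (Fin d)) : Prop :=
  v ≠ w ∧ IsExtreme ℝ P (segment ℝ v w)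

/-- `e` is an edge direction of `P`: a positive scalar multiple of `w - v`
for some edge `[v,w]` of `P`. -/
def IsEdgeDir {d : ℕ} (P : Set (EuclideanSpace ℝ (Fin d)))
    (e : EuclideanSpace ℝ (Fin d)) : Prop :=
  ∃ v w, IsEdge P v w ∧ ∃ t : ℝ, 0 < t ∧ e = t • (w - v)

/-- `coneOf V`: all nonnegative (finite) linear combinations of elements of `V`. -/
def coneOf {d : ℕ} (V : Set (EuclideanSpace ℝ (Fin d))) : Set (EuclideanSpace ℝ (Fin d)) :=
  {x | ∃ (s : Finset (EuclideanSpace ℝ (Fin d))) (c : EuclideanSpace ℝ (Fin d) → ℝ),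
    ↑s ⊆ V ∧ (∀ v ∈ s, 0 ≤ c v) ∧ x = ∑ v ∈ s, c v • v}


open Set Pointwise

namespace EdgeAux

lemma sum_apply_eucl {n : ℕ} (s : Finset (EuclideanSpace ℝ (Fin n)))
    (c : EuclideanSpace ℝ (Fin n) → ℝ) (i : Fin n) :
    (∑ v ∈ s, c v • v) i = ∑ v ∈ s, c v * v i := by
  classical
  induction s using Finset.induction with
  | empty => simp
  | insert _ _ h ih =>
    rw [Finset.sum_insert h, Finset.sum_insert h, PiLp.add_apply, PiLp.smul_apply, ih, smul_eq_mul]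


variable {n : ℕ} {V : Set (EuclideanSpace ℝ (Fin n))}

lemma zero_mem_coneOf : (0 : EuclideanSpace ℝ (Fin n)) ∈ coneOf V :=
  ⟨∅, 0, by simp, by simp, by simp⟩

lemma mem_coneOf_self {v : EuclideanSpace ℝ (Fin n)} (hv : v ∈ V) : v ∈ coneOf V := by
  classical
  exact ⟨{v}, fun _ => 1, by simpa using hv, by simp, by simp⟩

lemma smul_mem_coneOf {x : EuclideanSpace ℝ (Fin n)} (hx : x ∈ coneOf V) {c : ℝ} (hc : 0 ≤ c) :
    c • x ∈ coneOf V := by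
  obtain ⟨s, cf, hsV, hcf, rfl⟩ := hx
  refine ⟨s, fun v => c * cf v, hsV, fun v hv => mul_nonneg hc (hcf v hv), ?_⟩
  rw [Finset.smul_sum]
  exact Finset.sum_congr rfl fun v _ => smul_smul c (cf v) v

lemma add_mem_coneOf {x y : EuclideanSpace ℝ (Fin n)} (hx : x ∈ coneOf V) (hy : y ∈ coneOf V) :
    x + y ∈ coneOf V := by
  classical
  obtain ⟨s, c, hsV, hc, rfl⟩ := hx
  obtain ⟨t, c', htV, hc', rfl⟩ := hy
  refine ⟨s ∪ t, fun v => (if v ∈ s then c v else 0) + (if v ∈ t then c' v else 0), ?_, ?_, ?_⟩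
  · push_cast
    exact Set.union_subset hsV htV
  · intro v _
    apply add_nonneg
    · split
      · exact hc v (by assumption)
      · exact le_rfl
    · split
      · exact hc' v (by assumption)
      · exact le_rfl
  · have h1 : ∑ v ∈ s ∪ t, (if v ∈ s then c v else 0) • v = ∑ v ∈ s, c v • v := by
      rw [← Finset.sum_subset Finset.subset_union_left
        (fun v _ hv => by rw [if_neg hv, zero_smul])]
      exact Finset.sum_congr rfl fun v hv => by rw [if_pos hv]
    have h2 : ∑ v ∈ s ∪ t, (if v ∈ t then c' v else 0) • v = ∑ v ∈ t, c' v • v := by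
      rw [Finset.union_comm s t,
        ← Finset.sum_subset Finset.subset_union_left
        (fun v _ hv => by rw [if_neg hv, zero_smul])]
      exact Finset.sum_congr rfl fun v hv => by rw [if_pos hv]
    rw [← h1, ← h2, ← Finset.sum_add_distrib]
    exact Finset.sum_congr rfl fun v _ => (add_smul _ _ _).symm

lemma convex_coneOf : Convex ℝ (coneOf V) := fun x hx y hy a b ha hb _ =>
  add_mem_coneOf (smul_mem_coneOf hx ha) (smul_mem_coneOf hy hb)

lemma smul_mem_segment_zero {x : EuclideanSpace ℝ (Fin n)} {c : ℝ} (h0 : 0 ≤ c) (h1 : c ≤ 1) :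
    c • x ∈ segment ℝ 0 x :=
  ⟨1 - c, c, by linarith, h0, by ring, by simp⟩

lemma mem_segment_zero {x z : EuclideanSpace ℝ (Fin n)} (h : z ∈ segment ℝ 0 x) :
    ∃ c : ℝ, 0 ≤ c ∧ c ≤ 1 ∧ z = c • x := by
  obtain ⟨a, b, ha, hb, hab, h⟩ := h
  exact ⟨b, hb, by linarith, by rw [← h]; simp⟩



variable {n : ℕ}

lemma ray_bddAbove {P : Set (EuclideanSpace ℝ (Fin n))} (hPc : IsCompact P)
    {e : EuclideanSpace ℝ (Fin n)} (he : e ≠ 0) :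
    BddAbove {t : ℝ | 0 ≤ t ∧ t • e ∈ P} := by
  obtain ⟨R, hR⟩ := hPc.isBounded.exists_norm_le
  refine ⟨R / ‖e‖, fun t ⟨ht, htP⟩ => ?_⟩
  have h1 : ‖t • e‖ ≤ R := hR _ htP
  rw [norm_smul, Real.norm_eq_abs, abs_of_nonneg ht] at h1
  exact (le_div_iff₀ (norm_pos_iff.2 he)).2 h1

lemma ray_closed {P : Set (EuclideanSpace ℝ (Fin n))} (hPc : IsCompact P)
    (e : EuclideanSpace ℝ (Fin n)) :
    IsClosed {t : ℝ | 0 ≤ t ∧ t • e ∈ P} := by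
  have : {t : ℝ | 0 ≤ t ∧ t • e ∈ P} = Ici (0:ℝ) ∩ (fun t : ℝ => t • e) ⁻¹' P := by
    ext t; simp [Set.mem_Ici, and_comm]
  rw [this]
  exact isClosed_Ici.inter (hPc.isClosed.preimage (continuous_id.smul continuous_const))

lemma ray_sSup_mem {P : Set (EuclideanSpace ℝ (Fin n))} (hPc : IsCompact P)
    (h0P : (0 : EuclideanSpace ℝ (Fin n)) ∈ P)
    {e : EuclideanSpace ℝ (Fin n)} (he : e ≠ 0) :
    sSup {t : ℝ | 0 ≤ t ∧ t • e ∈ P} ∈ {t : ℝ | 0 ≤ t ∧ t • e ∈ P} :=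
  (ray_closed hPc e).csSup_mem ⟨0, le_rfl, by simp [h0P]⟩ (ray_bddAbove hPc he)


/-- Key lemma: from an "extreme direction" `b` normalized by a linear functional `f`,
the segment from `0` to the farthest point `τ • b` of `P` on the ray of `b` is extreme. -/
lemma key_isExtreme {P : Set (EuclideanSpace ℝ (Fin n))}
    (hPconv : Convex ℝ P)
    (h0 : (0 : EuclideanSpace ℝ (Fin n)) ∈ Set.extremePoints ℝ P)
    (f : EuclideanSpace ℝ (Fin n) →L[ℝ] ℝ)
    (hf0 : ∀ x ∈ P, 0 ≤ f x)
    (hker : ∀ x ∈ P, f x = 0 → x = 0)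
    {b : EuclideanSpace ℝ (Fin n)} (hfb : f b = 1)
    (hbext : ∀ x₁ ∈ P, ∀ x₂ ∈ P, f x₁ ≠ 0 → f x₂ ≠ 0 →
      b ∈ openSegment ℝ ((f x₁)⁻¹ • x₁) ((f x₂)⁻¹ • x₂) →
      (f x₁)⁻¹ • x₁ = b ∧ (f x₂)⁻¹ • x₂ = b)
    {τ : ℝ} (hτ : 0 < τ) (hτP : τ • b ∈ P)
    (hub : ∀ t : ℝ, 0 ≤ t → t • b ∈ P → t ≤ τ) :
    IsExtreme ℝ P (segment ℝ 0 (τ • b)) := by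
  have h0P : (0 : EuclideanSpace ℝ (Fin n)) ∈ P := h0.1
  constructor
  · exact hPconv.segment_subset h0P hτP
  intro x₁ hx₁ x₂ hx₂ z hzseg hzopen
  suffices H : x₁ ∈ segment ℝ 0 (τ • b) ∧ x₂ ∈ segment ℝ 0 (τ • b) from H.1
  obtain ⟨t, ht0, ht1, rfl⟩ := mem_segment_zero hzseg
  obtain ⟨α, β, hα, hβ, hαβ, hsum⟩ := hzopen
  rcases eq_or_lt_of_le ht0 with ht | ht
  · -- z = 0
    have hz0 : α • x₁ + β • x₂ = 0 := by rw [hsum, ← ht, zero_smul]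
    have := (mem_extremePoints.1 h0).2 _ hx₁ _ hx₂ ⟨α, β, hα, hβ, hαβ, hz0⟩
    rw [this.1, this.2]
    exact ⟨left_mem_segment ℝ 0 (τ • b), left_mem_segment ℝ 0 (τ • b)⟩
  · -- z = (t*τ) • b with t*τ > 0
    have hzb : t • τ • b = (t * τ) • b := smul_smul t τ b
    have htτ : 0 < t * τ := mul_pos ht hτ
    have hfz : f (t • τ • b) = t * τ := by
      rw [map_smul, map_smul, hfb]; simp [smul_eq_mul]
    have hfx₁ : 0 ≤ f x₁ := hf0 x₁ hx₁
    have hfx₂ : 0 ≤ f x₂ := hf0 x₂ hx₂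
    have hfsum : α * f x₁ + β * f x₂ = t * τ := by
      have := congrArg f hsum
      rw [map_add, map_smul, map_smul] at this
      rw [← hfz, ← this]; simp [smul_eq_mul]
    -- helper to place a nonneg multiple of b that lies in P into the segment
    have place : ∀ s : ℝ, 0 ≤ s → s • b ∈ P → s • b ∈ segment ℝ 0 (τ • b) := by
      intro s hs hsP
      have hsτ : s ≤ τ := hub s hs hsP
      have : (s / τ) • (τ • b) = s • b := by
        rw [smul_smul, div_mul_cancel₀ _ (ne_of_gt hτ)]
      rw [← this]
      exact smul_mem_segment_zero (div_nonneg hs hτ.le) ((div_le_one hτ).2 hsτ)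
    by_cases h1 : f x₁ = 0
    · have hx10 : x₁ = 0 := hker x₁ hx₁ h1
      have hx2b : x₂ = (β⁻¹ * (t * τ)) • b := by
        have : β • x₂ = (t * τ) • b := by
          rw [← hzb, ← hsum, hx10]; simp
        calc x₂ = β⁻¹ • β • x₂ := (inv_smul_smul₀ (ne_of_gt hβ) x₂).symm
        _ = β⁻¹ • (t * τ) • b := by rw [this]
        _ = (β⁻¹ * (t * τ)) • b := smul_smul _ _ _
      constructor
      · rw [hx10]; exact left_mem_segment ℝ 0 (τ • b)
      · rw [hx2b]
        exact place _ (by positivity) (hx2b ▸ hx₂)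
    · by_cases h2 : f x₂ = 0
      · have hx20 : x₂ = 0 := hker x₂ hx₂ h2
        have hx1b : x₁ = (α⁻¹ * (t * τ)) • b := by
          have : α • x₁ = (t * τ) • b := by
            rw [← hzb, ← hsum, hx20]; simp
          calc x₁ = α⁻¹ • α • x₁ := (inv_smul_smul₀ (ne_of_gt hα) x₁).symm
          _ = α⁻¹ • (t * τ) • b := by rw [this]
          _ = (α⁻¹ * (t * τ)) • b := smul_smul _ _ _
        constructor
        · rw [hx1b]
          exact place _ (by positivity) (hx1b ▸ hx₁)
        · rw [hx20]; exact left_mem_segment ℝ 0 (τ • b)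
      · -- both functional values positive
        have hf1 : 0 < f x₁ := lt_of_le_of_ne hfx₁ (Ne.symm h1)
        have hf2 : 0 < f x₂ := lt_of_le_of_ne hfx₂ (Ne.symm h2)
        have hbseg : b ∈ openSegment ℝ ((f x₁)⁻¹ • x₁) ((f x₂)⁻¹ • x₂) := by
          refine ⟨α * f x₁ / (t * τ), β * f x₂ / (t * τ), by positivity, by positivity, ?_, ?_⟩
          · field_simp
            linarith [hfsum]
          · rw [smul_smul, smul_smul]
            have e1 : α * f x₁ / (t * τ) * (f x₁)⁻¹ = α / (t * τ) := by
              field_simp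
            have e2 : β * f x₂ / (t * τ) * (f x₂)⁻¹ = β / (t * τ) := by
              field_simp
            rw [e1, e2, div_eq_mul_inv, div_eq_mul_inv, mul_comm α, mul_comm β, mul_smul, mul_smul,
              ← smul_add, hsum, hzb, smul_smul, inv_mul_cancel₀ (ne_of_gt htτ), one_smul]
        obtain ⟨hb1, hb2⟩ := hbext x₁ hx₁ x₂ hx₂ h1 h2 hbseg
        have hx1b : x₁ = f x₁ • b := by rw [← hb1, smul_inv_smul₀ h1]
        have hx2b : x₂ = f x₂ • b := by rw [← hb2, smul_inv_smul₀ h2]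
        exact ⟨hx1b ▸ place _ hfx₁ (hx1b ▸ hx₁), hx2b ▸ place _ hfx₂ (hx2b ▸ hx₂)⟩


lemma polytope_subset_coneOf {n : ℕ} {P : Set (EuclideanSpace ℝ (Fin n))}
    (hP : IsPolytope P)
    (h0 : (0 : EuclideanSpace ℝ (Fin n)) ∈ Set.extremePoints ℝ P)
    {D : Finset (EuclideanSpace ℝ (Fin n))}
    (hD0 : ∀ e ∈ D, e ≠ 0)
    (hDdir : ∀ e, IsEdgeDir P e → ∃ u ∈ D, ∃ t : ℝ, 0 < t ∧ e = t • u)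
    (tstar : EuclideanSpace ℝ (Fin n) → ℝ)
    (htstar : ∀ e, tstar e = sSup {t : ℝ | 0 ≤ t ∧ t • e ∈ P})
    {Vcone : Set (EuclideanSpace ℝ (Fin n))}
    (hVcone : Vcone = {q | ∃ e ∈ D, 0 < tstar e ∧ q = tstar e • e}) :
    P ⊆ coneOf Vcone := by
  classical
  obtain ⟨S, hSne, hSP⟩ := hP
  have hPconv : Convex ℝ P := hSP ▸ convex_convexHull ℝ _
  have hPcomp : IsCompact P := hSP ▸ S.finite_toSet.isCompact_convexHull ℝ
  have h0P : (0 : EuclideanSpace ℝ (Fin n)) ∈ P := h0.1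
  set S' : Finset (EuclideanSpace ℝ (Fin n)) := S.erase 0 with hS'def
  by_cases hS'ne : S'.Nonempty
  swap
  · -- P = {0}
    have hS0 : (S : Set (EuclideanSpace ℝ (Fin n))) ⊆ {0} := by
      intro s hs
      by_contra h
      rw [Set.mem_singleton_iff] at h
      exact hS'ne ⟨s, Finset.mem_erase.2 ⟨h, Finset.mem_coe.1 hs⟩⟩
    have hP0 : P ⊆ {0} := by
      rw [hSP, ← convexHull_singleton (𝕜 := ℝ) (0 : EuclideanSpace ℝ (Fin n))]
      exact convexHull_mono hS0
    intro x hx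
    rw [Set.mem_singleton_iff.1 (hP0 hx)]
    exact zero_mem_coneOf
  have hS'P : ∀ s ∈ S', s ∈ P := by
    intro s hs
    rw [hSP]
    exact subset_convexHull ℝ _ (Finset.mem_coe.2 (Finset.mem_of_mem_erase hs))
  have hsubS' : convexHull ℝ (S' : Set (EuclideanSpace ℝ (Fin n))) ⊆ P := by
    rw [hSP]
    exact convexHull_mono (by exact_mod_cast Finset.erase_subset _ _)
  have h0S' : (0 : EuclideanSpace ℝ (Fin n)) ∉ convexHull ℝ (S' : Set (EuclideanSpace ℝ (Fin n))) := by
    intro hmem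
    have h0' : (0 : EuclideanSpace ℝ (Fin n)) ∈
        Set.extremePoints ℝ (convexHull ℝ (S' : Set (EuclideanSpace ℝ (Fin n)))) :=
      ⟨hmem, fun x₁ h₁ x₂ h₂ hseg => h0.2 (hsubS' h₁) (hsubS' h₂) hseg⟩
    have := extremePoints_convexHull_subset h0'
    rw [Finset.mem_coe, hS'def] at this
    exact (Finset.notMem_erase _ _) this
  obtain ⟨φ, u, hu0, hφu⟩ := geometric_hahn_banach_point_closed
    (convex_convexHull ℝ _) (S'.finite_toSet.isClosed_convexHull ℝ) h0S'
  rw [map_zero] at hu0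
  have hφS' : ∀ s ∈ S', u < φ s := fun s hs =>
    hφu s (subset_convexHull ℝ _ (Finset.mem_coe.2 hs))
  have hφpos : ∀ s ∈ S', 0 < φ s := fun s hs => lt_trans hu0 (hφS' s hs)
  have hrep : ∀ x ∈ P, ∃ w : EuclideanSpace ℝ (Fin n) → ℝ,
      (∀ y ∈ S, 0 ≤ w y) ∧ (∑ y ∈ S, w y = 1) ∧ x = ∑ y ∈ S, w y • y := by
    intro x hx
    rw [hSP, Finset.convexHull_eq] at hx
    obtain ⟨w, hw0, hw1, hwx⟩ := hx
    refine ⟨w, hw0, hw1, ?_⟩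
    rw [← hwx, Finset.centerMass_eq_of_sum_1 _ _ hw1]
    rfl
  have hf0 : ∀ x ∈ P, 0 ≤ φ x := by
    intro x hx
    obtain ⟨w, hw0, hw1, rfl⟩ := hrep x hx
    rw [map_sum]
    apply Finset.sum_nonneg
    intro y hy
    rw [map_smul, smul_eq_mul]
    by_cases hy0 : y = (0 : EuclideanSpace ℝ (Fin n))
    · simp [hy0]
    · exact mul_nonneg (hw0 y hy) (hφpos y (Finset.mem_erase.2 ⟨hy0, hy⟩)).le
  have hker : ∀ x ∈ P, φ x = 0 → x = 0 := by
    intro x hx hfx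
    obtain ⟨w, hw0, hw1, rfl⟩ := hrep x hx
    rw [map_sum] at hfx
    simp only [map_smul, smul_eq_mul] at hfx
    have hterm := (Finset.sum_eq_zero_iff_of_nonneg ?_).1 hfx
    swap
    · intro y hy
      by_cases hy0 : y = (0 : EuclideanSpace ℝ (Fin n))
      · simp [hy0]
      · exact mul_nonneg (hw0 y hy) (hφpos y (Finset.mem_erase.2 ⟨hy0, hy⟩)).le
    apply Finset.sum_eq_zero
    intro y hy
    by_cases hy0 : y = (0 : EuclideanSpace ℝ (Fin n))
    · simp [hy0]
    · have hφy : φ y ≠ 0 := (hφpos y (Finset.mem_erase.2 ⟨hy0, hy⟩)).ne'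
      have : w y = 0 := by
        rcases mul_eq_zero.1 (hterm y hy) with h | h
        · exact h
        · exact absurd h hφy
      rw [this, zero_smul]
  set S'' : Finset (EuclideanSpace ℝ (Fin n)) := S'.image (fun s => (φ s)⁻¹ • s) with hS''def
  set B : Set (EuclideanSpace ℝ (Fin n)) := convexHull ℝ (S'' : Set (EuclideanSpace ℝ (Fin n))) with hBdef
  have hS''φ : ∀ y ∈ S'', φ y = 1 := by
    intro y hy
    obtain ⟨s, hs, rfl⟩ := Finset.mem_image.1 hy
    rw [map_smul, smul_eq_mul, inv_mul_cancel₀ (hφpos s hs).ne']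
  have hBφ : ∀ y ∈ B, φ y = 1 := by
    intro y hy
    have hconv : Convex ℝ {z : EuclideanSpace ℝ (Fin n) | φ z = 1} := by
      intro a ha b hb p q hp hq hpq
      simp only [Set.mem_setOf_eq] at *
      rw [map_add, map_smul, map_smul, smul_eq_mul, smul_eq_mul, ha, hb]
      linarith
    exact convexHull_min (fun z hz => hS''φ z (Finset.mem_coe.1 hz)) hconv hy
  have hPB : ∀ x ∈ P, φ x ≠ 0 → (φ x)⁻¹ • x ∈ B := by
    intro x hx hfx
    have hφx : 0 < φ x := lt_of_le_of_ne (hf0 x hx) (Ne.symm hfx)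
    obtain ⟨w, hw0, hw1, hxe⟩ := hrep x hx
    have hzero : w 0 * φ (0 : EuclideanSpace ℝ (Fin n)) = 0 := by simp
    have hφxe : φ x = ∑ y ∈ S', w y * φ y := by
      rw [hxe, map_sum]
      simp only [map_smul, smul_eq_mul]
      rw [hS'def, Finset.sum_erase S hzero]
    set ω : EuclideanSpace ℝ (Fin n) → ℝ := fun s => (φ x)⁻¹ * (w s * φ s) with hωdef
    have hω0 : ∀ s ∈ S', 0 ≤ ω s := fun s hs =>
      mul_nonneg (inv_nonneg.2 hφx.le)
        (mul_nonneg (hw0 s (Finset.mem_of_mem_erase hs)) (hφpos s hs).le)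
    have hω1 : ∑ s ∈ S', ω s = 1 := by
      rw [hωdef, ← Finset.mul_sum, ← hφxe, inv_mul_cancel₀ hfx]
    have hcm : S'.centerMass ω (fun s => (φ s)⁻¹ • s) ∈ B := by
      apply Finset.centerMass_mem_convexHull
      · exact hω0
      · rw [hω1]; exact one_pos
      · intro s hs
        exact Finset.mem_coe.2 (Finset.mem_image_of_mem _ hs)
    rw [Finset.centerMass_eq_of_sum_1 _ _ hω1] at hcm
    have heq : ∑ s ∈ S', ω s • (φ s)⁻¹ • s = (φ x)⁻¹ • x := by
      have hzero' : w 0 • (0 : EuclideanSpace ℝ (Fin n)) = 0 := by simp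
      have h1 : ∀ s ∈ S', ω s • (φ s)⁻¹ • s = (φ x)⁻¹ • (w s • s) := by
        intro s hs
        have hφs : φ s ≠ 0 := (hφpos s hs).ne'
        rw [smul_smul, smul_smul, hωdef]
        congr 1
        field_simp
      rw [Finset.sum_congr rfl h1, ← Finset.smul_sum]
      congr 1
      rw [hS'def, Finset.sum_erase (f := fun y => w y • y) S hzero']
      exact hxe.symm
    rw [heq] at hcm
    exact hcm
  have hBcomp : IsCompact B := S''.finite_toSet.isCompact_convexHull ℝ
  have hBconv : Convex ℝ B := convex_convexHull ℝ _
  have hKM : B = convexHull ℝ (B.extremePoints ℝ) := by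
    have hfin : (B.extremePoints ℝ).Finite :=
      S''.finite_toSet.subset extremePoints_convexHull_subset
    exact Eq.trans (closure_convexHull_extremePoints hBcomp hBconv).symm
      (hfin.isClosed_convexHull ℝ).closure_eq
  have hextC : ∀ b ∈ B.extremePoints ℝ, b ∈ coneOf Vcone := by
    intro b hbext
    have hbB : b ∈ B := hbext.1
    have hφb : φ b = 1 := hBφ b hbB
    have hbne : b ≠ 0 := by
      intro h
      rw [h, map_zero] at hφb
      exact zero_ne_one hφb
    have huS'' : ∀ y ∈ (S'' : Set (EuclideanSpace ℝ (Fin n))), u • y ∈ P := by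
      intro y hy
      obtain ⟨s, hs, rfl⟩ := Finset.mem_image.1 (Finset.mem_coe.1 hy)
      have hsP : s ∈ P := hS'P s hs
      have hre : u • (φ s)⁻¹ • s = (u / φ s) • s := by
        rw [smul_smul, div_eq_mul_inv]
      rw [hre]
      exact hPconv.segment_subset h0P hsP
        (smul_mem_segment_zero (div_nonneg hu0.le (hφpos s hs).le)
          ((div_le_one (hφpos s hs)).2 (hφS' s hs).le))
    have hubP : u • b ∈ P := by
      have hmem : u • b ∈ u • B := smul_mem_smul_set hbB
      rw [hBdef, ← convexHull_smul] at hmem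
      refine convexHull_min ?_ hPconv hmem
      rintro z ⟨y, hy, rfl⟩
      exact huS'' y hy
    have hbdd := ray_bddAbove hPcomp hbne
    have hsupA := ray_sSup_mem hPcomp h0P hbne
    set τ : ℝ := sSup {t : ℝ | 0 ≤ t ∧ t • b ∈ P} with hτdef
    have hτu : u ≤ τ := le_csSup hbdd ⟨hu0.le, hubP⟩
    have hτpos : 0 < τ := lt_of_lt_of_le hu0 hτu
    have hτP : τ • b ∈ P := hsupA.2
    have hubτ : ∀ t : ℝ, 0 ≤ t → t • b ∈ P → t ≤ τ := fun t ht htP => le_csSup hbdd ⟨ht, htP⟩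
    have hbext' : ∀ x₁ ∈ P, ∀ x₂ ∈ P, φ x₁ ≠ 0 → φ x₂ ≠ 0 →
        b ∈ openSegment ℝ ((φ x₁)⁻¹ • x₁) ((φ x₂)⁻¹ • x₂) →
        (φ x₁)⁻¹ • x₁ = b ∧ (φ x₂)⁻¹ • x₂ = b := by
      intro x₁ hx₁ x₂ hx₂ h1 h2 hseg
      exact (mem_extremePoints.1 hbext).2 _ (hPB x₁ hx₁ h1) _ (hPB x₂ hx₂ h2) hseg
    have hedge : IsEdge P 0 (τ • b) := by
      refine ⟨?_, key_isExtreme hPconv h0 φ hf0 hker hφb hbext' hτpos hτP hubτ⟩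
      intro h
      exact (smul_ne_zero hτpos.ne' hbne) h.symm
    have hdir : IsEdgeDir P (τ • b) := ⟨0, τ • b, hedge, 1, one_pos, by simp⟩
    obtain ⟨e, heD, t, ht, hte⟩ := hDdir _ hdir
    have htA : t ∈ {s : ℝ | 0 ≤ s ∧ s • e ∈ P} := ⟨ht.le, by rw [← hte]; exact hτP⟩
    have htpos : 0 < tstar e := by
      rw [htstar e]
      exact lt_of_lt_of_le ht (le_csSup (ray_bddAbove hPcomp (hD0 e heD)) htA)
    have hq : tstar e • e ∈ Vcone := by
      rw [hVcone]; exact ⟨e, heD, htpos, rfl⟩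
    have hbeq : b = (τ⁻¹ * (t * (tstar e)⁻¹)) • (tstar e • e) := by
      rw [smul_smul]
      have hc : τ⁻¹ * (t * (tstar e)⁻¹) * tstar e = τ⁻¹ * t := by
        field_simp
      rw [hc, ← smul_smul, ← hte, smul_smul, inv_mul_cancel₀ hτpos.ne', one_smul]
    rw [hbeq]
    exact smul_mem_coneOf (mem_coneOf_self hq)
      (mul_nonneg (inv_nonneg.2 hτpos.le) (mul_nonneg ht.le (inv_nonneg.2 htpos.le)))
  have hBC : B ⊆ coneOf Vcone := by
    rw [hKM]
    exact convexHull_min hextC convex_coneOf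
  intro x hx
  by_cases hfx : φ x = 0
  · rw [hker x hx hfx]
    exact zero_mem_coneOf
  · have hxe : x = φ x • ((φ x)⁻¹ • x) := (smul_inv_smul₀ hfx x).symm
    rw [hxe]
    exact smul_mem_coneOf (hBC (hPB x hx hfx)) (hf0 x hx)


end EdgeAux

theorem edge_skeleton_extremal_ray_characterization {d : ℕ}
    (P : Set (EuclideanSpace ℝ (Fin (d + 1)))) (hP : IsPolytope P)
    (h0 : (0 : EuclideanSpace ℝ (Fin (d + 1))) ∈ Set.extremePoints ℝ P)
    (D : Finset (EuclideanSpace ℝ (Fin (d + 1))))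
    (hD0 : ∀ e ∈ D, e ≠ 0)
    (hDdir : ∀ e, IsEdgeDir P e → ∃ u ∈ D, ∃ t : ℝ, 0 < t ∧ e = t • u)
    (tstar : EuclideanSpace ℝ (Fin (d + 1)) → ℝ)
    (htstar : ∀ e, tstar e = sSup {t : ℝ | 0 ≤ t ∧ t • e ∈ P})
    (Vcone : Set (EuclideanSpace ℝ (Fin (d + 1))))
    (hVcone : Vcone = {q | ∃ e ∈ D, 0 < tstar e ∧ q = tstar e • e})
    (hlast : ∀ q ∈ Vcone, 1 ≤ q (Fin.last d)) :
    ∀ w : EuclideanSpace ℝ (Fin (d + 1)), w ≠ 0 →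
      (IsEdge P 0 w ↔
        w ∈ Vcone ∧
          (w (Fin.last d))⁻¹ • w ∈
            Set.extremePoints ℝ (coneOf Vcone ∩ {x | x (Fin.last d) = 1})) := by
  classical
  intro w hw
  obtain ⟨S, hSne, hSP⟩ := hP
  have hPconv : Convex ℝ P := hSP ▸ convex_convexHull ℝ _
  have hPcomp : IsCompact P := hSP ▸ S.finite_toSet.isCompact_convexHull ℝ
  have h0P : (0 : EuclideanSpace ℝ (Fin (d + 1))) ∈ P := h0.1
  set C : Set (EuclideanSpace ℝ (Fin (d + 1))) := coneOf Vcone with hC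
  have hVP : ∀ q ∈ Vcone, q ∈ P := by
    intro q hq
    rw [hVcone] at hq
    obtain ⟨e, heD, hte, rfl⟩ := hq
    have hmem := EdgeAux.ray_sSup_mem hPcomp h0P (hD0 e heD)
    rw [← htstar e] at hmem
    exact hmem.2
  have hray : ∀ q ∈ Vcone, ∀ c : ℝ, 0 ≤ c → c • q ∈ P → c ≤ 1 := by
    intro q hq c hc hcP
    rw [hVcone] at hq
    obtain ⟨e, heD, hte, rfl⟩ := hq
    have hmem : c * tstar e ∈ {t : ℝ | 0 ≤ t ∧ t • e ∈ P} := by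
      refine ⟨mul_nonneg hc hte.le, ?_⟩
      rw [mul_smul]
      exact hcP
    have hle : c * tstar e ≤ tstar e := by
      have h1 := le_csSup (EdgeAux.ray_bddAbove hPcomp (hD0 e heD)) hmem
      rw [← htstar e] at h1
      exact h1
    exact (mul_le_iff_le_one_left hte).1 hle
  have hPC : P ⊆ C :=
    EdgeAux.polytope_subset_coneOf ⟨S, hSne, hSP⟩ h0 hD0 hDdir tstar htstar hVcone
  have hClast : ∀ z ∈ C, 0 ≤ z (Fin.last d) ∧ (z (Fin.last d) = 0 → z = 0) := by
    intro z hz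
    obtain ⟨s, c, hsV, hc, rfl⟩ := hz
    rw [EdgeAux.sum_apply_eucl]
    have hterm : ∀ v ∈ s, 0 ≤ c v * v (Fin.last d) := fun v hv =>
      mul_nonneg (hc v hv) (le_trans zero_le_one (hlast v (hsV hv)))
    refine ⟨Finset.sum_nonneg hterm, ?_⟩
    intro hsum0
    have hall := (Finset.sum_eq_zero_iff_of_nonneg hterm).1 hsum0
    apply Finset.sum_eq_zero
    intro v hv
    have hvlast : (1:ℝ) ≤ v (Fin.last d) := hlast v (hsV hv)
    have hcv : c v = 0 := by
      rcases mul_eq_zero.1 (hall v hv) with h | h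
      · exact h
      · linarith
    rw [hcv, zero_smul]
  have htan : ∀ z ∈ C, ∃ ε : ℝ, 0 < ε ∧ ε • z ∈ P := by
    intro z hz
    obtain ⟨s, c, hsV, hc, rfl⟩ := hz
    rcases eq_or_lt_of_le (Finset.sum_nonneg fun v hv => hc v hv) with h | h
    · refine ⟨1, one_pos, ?_⟩
      have hall := (Finset.sum_eq_zero_iff_of_nonneg (fun v hv => hc v hv)).1 h.symm
      have hz0 : ∑ v ∈ s, c v • v = 0 :=
        Finset.sum_eq_zero fun v hv => by rw [hall v hv, zero_smul]
      rw [hz0, smul_zero]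
      exact h0P
    · refine ⟨(∑ v ∈ s, c v)⁻¹, inv_pos.2 h, ?_⟩
      have hcm : s.centerMass c id ∈ convexHull ℝ P :=
        Finset.centerMass_mem_convexHull s (fun v hv => hc v hv) h
          (fun v hv => hVP v (hsV hv))
      rw [hPconv.convexHull_eq] at hcm
      have hcmeq : s.centerMass c id = (∑ v ∈ s, c v)⁻¹ • ∑ v ∈ s, c v • v := by
        rw [Finset.centerMass]
        rfl
      rw [hcmeq] at hcm
      exact hcm
  have hshrink : ∀ x ∈ P, ∀ c : ℝ, 0 ≤ c → c ≤ 1 → c • x ∈ P := fun x hx c h0c h1c =>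
    hPconv.segment_subset h0P hx (EdgeAux.smul_mem_segment_zero h0c h1c)
  constructor
  · -- forward direction
    intro hEdge
    have hwP : w ∈ P := hEdge.2.1 (right_mem_segment ℝ 0 w)
    obtain ⟨e, heD, t, ht, hwte⟩ := hDdir w ⟨0, w, hEdge, 1, one_pos, by simp⟩
    have hene : e ≠ 0 := hD0 e heD
    have hspos : ∀ s : ℝ, t < s → 0 < s := fun s hs => lt_trans ht hs
    have htub : ∀ s ∈ {t : ℝ | 0 ≤ t ∧ t • e ∈ P}, s ≤ t := by
      intro s hs
      by_contra hgt
      push_neg at hgt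
      have hs0 : 0 < s := hspos s hgt
      have hzopen : w ∈ openSegment ℝ (s • e) (0 : EuclideanSpace ℝ (Fin (d + 1))) := by
        refine ⟨t / s, 1 - t / s, div_pos ht hs0, ?_, by ring, ?_⟩
        · have h1 : t / s < 1 := (div_lt_one hs0).2 hgt
          linarith
        · rw [smul_zero, add_zero, smul_smul, div_mul_cancel₀ _ hs0.ne']
          exact hwte.symm
      have hres := hEdge.2.2 hs.2 h0P (right_mem_segment ℝ 0 w) hzopen
      obtain ⟨c, hc0, hc1, hceq⟩ := EdgeAux.mem_segment_zero hres
      have hse : s • e = (c * t) • e := by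
        rw [hceq, hwte, smul_smul]
      have hst : s = c * t := by
        by_contra hne
        apply hene
        have h2 : (s - c * t) • e = 0 := by rw [sub_smul, hse, sub_self]
        rcases smul_eq_zero.1 h2 with h3 | h3
        · exact absurd (sub_eq_zero.1 h3) hne
        · exact h3
      nlinarith
    have htmem : t ∈ {t : ℝ | 0 ≤ t ∧ t • e ∈ P} := ⟨ht.le, by rw [← hwte]; exact hwP⟩
    have htt : tstar e = t := by
      rw [htstar e]
      exact le_antisymm (csSup_le ⟨t, htmem⟩ htub) (le_csSup ⟨t, htub⟩ htmem)
    have hwV : w ∈ Vcone := by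
      rw [hVcone]
      refine ⟨e, heD, htt ▸ ht, ?_⟩
      rw [htt, ← hwte]
    have hwd1 : (1:ℝ) ≤ w (Fin.last d) := hlast w hwV
    have hwd : 0 < w (Fin.last d) := lt_of_lt_of_le one_pos hwd1
    refine ⟨hwV, ⟨⟨EdgeAux.smul_mem_coneOf (EdgeAux.mem_coneOf_self hwV)
      (inv_nonneg.2 hwd.le), ?_⟩, ?_⟩⟩
    · show ((w (Fin.last d))⁻¹ • w) (Fin.last d) = 1
      rw [PiLp.smul_apply, smul_eq_mul]
      exact inv_mul_cancel₀ hwd.ne'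
    · rintro y₁ ⟨hy₁C, hy₁H⟩ y₂ ⟨hy₂C, hy₂H⟩ hseg
      obtain ⟨α, β, hα, hβ, hαβ, hsum⟩ := hseg
      obtain ⟨ε₁, hε₁, hε₁P⟩ := htan y₁ hy₁C
      obtain ⟨ε₂, hε₂, hε₂P⟩ := htan y₂ hy₂C
      set ε := min (min ε₁ ε₂) (w (Fin.last d)) with hεdef
      have hεpos : 0 < ε := lt_min (lt_min hε₁ hε₂) hwd
      have hεy₁ : ε • y₁ ∈ P := by
        have heq1 : ε • y₁ = (ε / ε₁) • (ε₁ • y₁) := by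
          rw [smul_smul, div_mul_cancel₀ _ hε₁.ne']
        rw [heq1]
        exact hshrink _ hε₁P _ (by positivity)
          ((div_le_one hε₁).2 (le_trans (min_le_left _ _) (min_le_left _ _)))
      have hεy₂ : ε • y₂ ∈ P := by
        have heq2 : ε • y₂ = (ε / ε₂) • (ε₂ • y₂) := by
          rw [smul_smul, div_mul_cancel₀ _ hε₂.ne']
        rw [heq2]
        exact hshrink _ hε₂P _ (by positivity)
          ((div_le_one hε₂).2 (le_trans (min_le_left _ _) (min_le_right _ _)))
      have hz1 : (ε * (w (Fin.last d))⁻¹) • w ∈ segment ℝ 0 w := by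
        apply EdgeAux.smul_mem_segment_zero (by positivity)
        rw [← div_eq_mul_inv]
        exact (div_le_one hwd).2 (min_le_right _ _)
      have hz2 : (ε * (w (Fin.last d))⁻¹) • w ∈ openSegment ℝ (ε • y₁) (ε • y₂) := by
        refine ⟨α, β, hα, hβ, hαβ, ?_⟩
        rw [smul_comm α ε, smul_comm β ε, ← smul_add, hsum, smul_smul]
      have hres := hEdge.2.2 hεy₁ hεy₂ hz1 hz2
      have hfinal : ∀ y : EuclideanSpace ℝ (Fin (d + 1)), y (Fin.last d) = 1 →
          ε • y ∈ segment ℝ 0 w → y = (w (Fin.last d))⁻¹ • w := by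
        intro y hyH hymem
        obtain ⟨c, hc0, hc1, hceq⟩ := EdgeAux.mem_segment_zero hymem
        have hyw : y = (ε⁻¹ * c) • w := by
          rw [← inv_smul_smul₀ hεpos.ne' y, hceq, smul_smul]
        have hlast1 : (ε⁻¹ * c) * w (Fin.last d) = 1 := by
          have happ := congrArg (fun v : EuclideanSpace ℝ (Fin (d + 1)) => v (Fin.last d)) hyw
          simp only [PiLp.smul_apply, smul_eq_mul] at happ
          rw [hyH] at happ
          exact happ.symm
        have hcoef : ε⁻¹ * c = (w (Fin.last d))⁻¹ := eq_inv_of_mul_eq_one_left hlast1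
        rw [hyw, hcoef]
      have hy₁H' : y₁ (Fin.last d) = 1 := hy₁H
      have hy₂H' : y₂ (Fin.last d) = 1 := hy₂H
      exact hfinal y₁ hy₁H' hres
  · -- reverse direction
    rintro ⟨hwV, hext⟩
    have hwd1 : (1:ℝ) ≤ w (Fin.last d) := hlast w hwV
    have hwd : 0 < w (Fin.last d) := lt_of_lt_of_le one_pos hwd1
    have hwP : w ∈ P := hVP w hwV
    set f : EuclideanSpace ℝ (Fin (d + 1)) →L[ℝ] ℝ :=
      EuclideanSpace.proj (Fin.last d) with hfdef
    have hfapp : ∀ x : EuclideanSpace ℝ (Fin (d + 1)), f x = x (Fin.last d) := fun _ => rfl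
    set b : EuclideanSpace ℝ (Fin (d + 1)) := (w (Fin.last d))⁻¹ • w with hbdef
    have hfb : f b = 1 := by
      rw [hfapp, hbdef, PiLp.smul_apply, smul_eq_mul]
      exact inv_mul_cancel₀ hwd.ne'
    have hf0 : ∀ x ∈ P, 0 ≤ f x := fun x hx => (hClast x (hPC hx)).1
    have hker : ∀ x ∈ P, f x = 0 → x = 0 := fun x hx h => (hClast x (hPC hx)).2 h
    have hbext : ∀ x₁ ∈ P, ∀ x₂ ∈ P, f x₁ ≠ 0 → f x₂ ≠ 0 →
        b ∈ openSegment ℝ ((f x₁)⁻¹ • x₁) ((f x₂)⁻¹ • x₂) →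
        (f x₁)⁻¹ • x₁ = b ∧ (f x₂)⁻¹ • x₂ = b := by
      intro x₁ hx₁ x₂ hx₂ h1 h2 hseg
      have hm : ∀ x ∈ P, f x ≠ 0 →
          (f x)⁻¹ • x ∈ C ∩ {z : EuclideanSpace ℝ (Fin (d + 1)) | z (Fin.last d) = 1} := by
        intro x hx hfx
        refine ⟨EdgeAux.smul_mem_coneOf (hPC hx) (inv_nonneg.2 (hf0 x hx)), ?_⟩
        show ((f x)⁻¹ • x) (Fin.last d) = 1
        rw [PiLp.smul_apply, smul_eq_mul, ← hfapp x]
        exact inv_mul_cancel₀ hfx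
      exact (mem_extremePoints.1 hext).2 _ (hm x₁ hx₁ h1) _ (hm x₂ hx₂ h2) hseg
    have hub : ∀ t : ℝ, 0 ≤ t → t • b ∈ P → t ≤ w (Fin.last d) := by
      intro t h0t htP
      have heq : t • b = (t * (w (Fin.last d))⁻¹) • w := by rw [hbdef, smul_smul]
      rw [heq] at htP
      have hle := hray w hwV _ (by positivity) htP
      calc t = t * (w (Fin.last d))⁻¹ * w (Fin.last d) := by field_simp
        _ ≤ 1 * w (Fin.last d) := mul_le_mul_of_nonneg_right hle hwd.le
        _ = w (Fin.last d) := one_mul _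
    have hwbP : w (Fin.last d) • b ∈ P := by
      rw [hbdef, smul_inv_smul₀ hwd.ne']
      exact hwP
    have hIsExt := EdgeAux.key_isExtreme hPconv h0 f hf0 hker hfb hbext hwd hwbP hub
    refine ⟨fun h => hw h.symm, ?_⟩
    have hrw : w (Fin.last d) • b = w := by rw [hbdef, smul_inv_smul₀ hwd.ne']
    rw [← hrw]
    exact hIsExt
end

section
/- Let P ⊆ ℝ^d be a polytope and let v be a vertex of P. Then P ⊆ v + cone({w − v : w is a vertex of P adjacent to v}), i.e. every point of P is v plus a nonnegative linear combination of the edge vectors at v. -/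
open scoped BigOperators

open Classical in
noncomputable def genDirs {d : ℕ} (S : Finset (EuclideanSpace ℝ (Fin d)))
    (v : EuclideanSpace ℝ (Fin d)) : Finset (EuclideanSpace ℝ (Fin d)) :=
  (S.erase v).image (· - v)

variable {d : ℕ} {V : Set (EuclideanSpace ℝ (Fin d))}

lemma coneOf_zero_mem : (0 : EuclideanSpace ℝ (Fin d)) ∈ coneOf V :=
  ⟨∅, 0, by simp, by simp, by simp⟩

lemma coneOf_smul_gen {u : EuclideanSpace ℝ (Fin d)} (hu : u ∈ V) {t : ℝ} (ht : 0 ≤ t) :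
    t • u ∈ coneOf V :=
  ⟨{u}, fun _ => t, by simpa using hu, fun _ _ => ht, by simp⟩

lemma coneOf_add_mem {a b : EuclideanSpace ℝ (Fin d)}
    (ha : a ∈ coneOf V) (hb : b ∈ coneOf V) : a + b ∈ coneOf V := by
  classical
  obtain ⟨s₁, c₁, hs₁, hc₁, rfl⟩ := ha
  obtain ⟨s₂, c₂, hs₂, hc₂, rfl⟩ := hb
  refine ⟨s₁ ∪ s₂,
    (fun x => (if x ∈ s₁ then c₁ x else 0) + (if x ∈ s₂ then c₂ x else 0)), ?_, ?_, ?_⟩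
  · intro x hx
    rcases Finset.mem_union.1 (by simpa using hx) with h | h
    exacts [hs₁ h, hs₂ h]
  · intro x _
    have h1 : (0:ℝ) ≤ if x ∈ s₁ then c₁ x else 0 := by split_ifs with h; exacts [hc₁ x h, le_rfl]
    have h2 : (0:ℝ) ≤ if x ∈ s₂ then c₂ x else 0 := by split_ifs with h; exacts [hc₂ x h, le_rfl]
    exact add_nonneg h1 h2
  · simp only [add_smul, Finset.sum_add_distrib, ite_smul, zero_smul,
      Finset.sum_ite_mem, Finset.union_inter_cancel_left, Finset.union_inter_cancel_right]

lemma coneOf_smul_mem {a : EuclideanSpace ℝ (Fin d)} (ha : a ∈ coneOf V) {t : ℝ} (ht : 0 ≤ t) :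
    t • a ∈ coneOf V := by
  obtain ⟨s, c, hs, hc, rfl⟩ := ha
  exact ⟨s, fun x => t * c x, hs, fun v hv => mul_nonneg ht (hc v hv),
    by rw [Finset.smul_sum]; simp [mul_smul]⟩

lemma coneOf_sum_mem {ι : Type*} (s : Finset ι) (g : ι → EuclideanSpace ℝ (Fin d))
    (h : ∀ i ∈ s, g i ∈ coneOf V) : ∑ i ∈ s, g i ∈ coneOf V := by
  classical
  induction s using Finset.induction with
  | empty => simpa using (coneOf_zero_mem (V := V))
  | insert _ _ hx ih =>
    rw [Finset.sum_insert hx]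
    exact coneOf_add_mem (h _ (Finset.mem_insert_self _ _))
      (ih fun i hi => h i (Finset.mem_insert_of_mem hi))

lemma coneOf_convex : Convex ℝ (coneOf V) := by
  intro x hx y hy a b ha hb _
  exact coneOf_add_mem (coneOf_smul_mem hx ha) (coneOf_smul_mem hy hb)


variable {S : Finset (EuclideanSpace ℝ (Fin d))} {v : EuclideanSpace ℝ (Fin d)}
  {T : Finset (EuclideanSpace ℝ (Fin d))} {f : EuclideanSpace ℝ (Fin d) →L[ℝ] ℝ}

lemma sub_mem_coneOf_gen {p : EuclideanSpace ℝ (Fin d)} (hp : p ∈ convexHull ℝ (S : Set _)) :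
    p - v ∈ coneOf (genDirs S v : Set _) := by
  classical
  obtain ⟨w, hw0, hw1, hweq⟩ := Finset.mem_convexHull'.1 hp
  simp only [genDirs]
  have key : p - v = ∑ y ∈ S.erase v, w y • (y - v) := by
    rw [Finset.sum_erase _ (by simp)]
    have : ∑ y ∈ S, w y • (y - v) = (∑ y ∈ S, w y • y) - (∑ y ∈ S, w y) • v := by
      simp [smul_sub, Finset.sum_sub_distrib, Finset.sum_smul]
    rw [this, hw1, hweq, one_smul]
  refine ⟨genDirs S v, fun g => w (g + v), subset_rfl, ?_, ?_⟩
  · intro g hg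
    simp only [genDirs] at hg
    obtain ⟨y, hy, rfl⟩ := Finset.mem_image.1 hg
    simpa using hw0 y (Finset.mem_of_mem_erase hy)
  · simp only [genDirs]
    rw [key, Finset.sum_image (by intro a _ b _ h; simpa using h)]
    simp

lemma zero_not_mem_genHull (hv : v ∈ (convexHull ℝ (S : Set _)).extremePoints ℝ) :
    (0 : EuclideanSpace ℝ (Fin d)) ∉ convexHull ℝ (genDirs S v : Set _) := by
  classical
  intro h0
  obtain ⟨μ, hμ0, hμ1, hμeq⟩ := Finset.mem_convexHull'.1 h0
  simp only [genDirs] at hμ0 hμ1 hμeq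
  rw [Finset.sum_image (by intro a _ b _ h; simpa using h)] at hμeq
  rw [Finset.sum_image (by intro a _ b _ h; simpa using h)] at hμ1
  have hvmem : v ∈ convexHull ℝ ((S.erase v : Finset _) : Set _) := by
    refine Finset.mem_convexHull'.2 ⟨fun y => μ (y - v), ?_, hμ1, ?_⟩
    · intro y hy
      exact hμ0 _ (Finset.mem_image_of_mem _ hy)

    · have : ∑ y ∈ S.erase v, μ (y - v) • y
          = (∑ y ∈ S.erase v, μ (y - v) • (y - v)) + (∑ y ∈ S.erase v, μ (y - v)) • v := by
        simp [smul_sub, Finset.sum_sub_distrib, Finset.sum_smul]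
      rw [this, hμeq, hμ1, zero_add, one_smul]
  have hconv : Convex ℝ ((convexHull ℝ (S : Set _)) \ {v}) :=
    ((convex_convexHull ℝ _).mem_extremePoints_iff_convex_diff.1 hv).2
  have hsub : ((S.erase v : Finset _) : Set _) ⊆ (convexHull ℝ (S : Set _)) \ {v} := by
    intro y hy
    simp only [Finset.coe_erase, Set.mem_diff] at hy ⊢
    exact ⟨subset_convexHull ℝ _ hy.1, hy.2⟩
  have := convexHull_min hsub hconv hvmem
  exact this.2 rfl

open Classical in
/-- normalized generators: a compact base of the cone. -/
noncomputable def normBase {d : ℕ} (T : Finset (EuclideanSpace ℝ (Fin d)))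
    (f : EuclideanSpace ℝ (Fin d) →L[ℝ] ℝ) : Finset (EuclideanSpace ℝ (Fin d)) :=
  T.image fun g => (f g)⁻¹ • g

/-- `f` is nonnegative on the cone, and vanishes only at `0`. -/
lemma cone_f_pos (hfT : ∀ g ∈ T, 0 < f g) {k : EuclideanSpace ℝ (Fin d)}
    (hk : k ∈ coneOf (T : Set _)) : 0 ≤ f k ∧ (f k = 0 → k = 0) := by
  obtain ⟨s, c, hs, hc, rfl⟩ := hk
  have hterm : ∀ g ∈ s, 0 ≤ c g * f g := fun g hg =>
    mul_nonneg (hc g hg) (hfT g (hs hg)).le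
  have hfsum : f (∑ g ∈ s, c g • g) = ∑ g ∈ s, c g * f g := by
    rw [map_sum]; simp [smul_eq_mul]
  constructor
  · rw [hfsum]; exact Finset.sum_nonneg hterm
  · intro h0
    rw [hfsum] at h0
    have hall := (Finset.sum_eq_zero_iff_of_nonneg hterm).1 h0
    refine Finset.sum_eq_zero fun g hg => ?_
    have : c g = 0 := by
      have := hall g hg
      have hfg := hfT g (hs hg)
      nlinarith
    simp [this]

lemma f_eq_one_on_base (hfT : ∀ g ∈ T, 0 < f g) {b : EuclideanSpace ℝ (Fin d)}
    (hb : b ∈ convexHull ℝ ((normBase T f : Finset _) : Set _)) : f b = 1 := by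
  have hconv : Convex ℝ {x : EuclideanSpace ℝ (Fin d) | f x = 1} :=
    convex_hyperplane ⟨f.map_add, f.map_smul⟩ 1
  have hsub : ((normBase T f : Finset _) : Set _) ⊆ {x | f x = 1} := by
    intro x hx
    simp only [normBase, Finset.coe_image] at hx
    obtain ⟨g, hg, rfl⟩ := hx
    simp only [Set.mem_setOf_eq, map_smul, smul_eq_mul]
    exact inv_mul_cancel₀ (hfT g hg).ne'
  exact convexHull_min hsub hconv hb

lemma base_sub_cone (hfT : ∀ g ∈ T, 0 < f g) :
    convexHull ℝ ((normBase T f : Finset _) : Set _)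
      ⊆ coneOf (T : Set (EuclideanSpace ℝ (Fin d))) := by
  refine convexHull_min ?_ coneOf_convex
  intro x hx
  simp only [normBase, Finset.coe_image] at hx
  obtain ⟨g, hg, rfl⟩ := hx
  exact coneOf_smul_gen (Finset.mem_coe.2 (Finset.mem_coe.1 hg)) (inv_nonneg.2 (hfT g (Finset.mem_coe.1 hg)).le)

lemma normalized_mem_base (hfT : ∀ g ∈ T, 0 < f g) {k : EuclideanSpace ℝ (Fin d)}
    (hk : k ∈ coneOf (T : Set _)) (hk0 : k ≠ 0) :
    (f k)⁻¹ • k ∈ convexHull ℝ ((normBase T f : Finset _) : Set _) := by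
  have hfk : 0 < f k := by
    rcases cone_f_pos hfT hk with ⟨h1, h2⟩
    rcases h1.lt_or_eq with h | h
    · exact h
    · exact absurd (h2 h.symm) hk0
  obtain ⟨s, c, hs, hc, hkeq⟩ := hk
  have hfsum : f k = ∑ g ∈ s, c g * f g := by
    rw [hkeq, map_sum]; simp [smul_eq_mul]
  have := (convex_convexHull ℝ ((normBase T f : Finset _) : Set _)).sum_mem
    (t := s) (w := fun g => c g * f g / f k) (z := fun g => (f g)⁻¹ • g)
    (fun g hg => div_nonneg (mul_nonneg (hc g hg) (hfT g (hs hg)).le) hfk.le)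
    (by rw [← Finset.sum_div, ← hfsum, div_self hfk.ne'])
    (fun g hg => subset_convexHull ℝ _ (by
      simp only [normBase, Finset.coe_image]
      exact Set.mem_image_of_mem _ (by exact_mod_cast hs hg)))
  convert this using 1
  rw [hkeq, Finset.smul_sum]
  refine Finset.sum_congr rfl fun g hg => ?_
  rw [smul_smul, smul_smul]
  congr 1
  have h1 := (hfT g (hs hg)).ne'
  have h2 : (∑ x ∈ s, c x * f x) ≠ 0 := by rw [← hfsum]; exact hfk.ne'
  field_simp

lemma ray_mem_polytope (hvP : v ∈ convexHull ℝ (S : Set _)) {k : EuclideanSpace ℝ (Fin d)}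
    (hk : k ∈ coneOf (genDirs S v : Set _)) :
    ∃ ε : ℝ, 0 < ε ∧ v + ε • k ∈ convexHull ℝ (S : Set _) := by
  classical
  obtain ⟨s, c, hs, hc, rfl⟩ := hk
  set M := ∑ g ∈ s, c g with hM
  have hM0 : 0 ≤ M := Finset.sum_nonneg fun g hg => hc g hg
  rcases eq_or_lt_of_le hM0 with hM0' | hMpos
  · have hz : ∀ g ∈ s, c g = 0 := fun g hg =>
      (Finset.sum_eq_zero_iff_of_nonneg (fun g hg => hc g hg)).1 hM0'.symm g hg
    refine ⟨1, one_pos, ?_⟩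
    have h0 : ∑ g ∈ s, c g • g = 0 := Finset.sum_eq_zero fun g hg => by rw [hz g hg, zero_smul]
    rw [h0]; simpa using hvP
  · set q := ∑ g ∈ s, (c g / M) • (g + v) with hq
    have hgS : ∀ g ∈ s, g + v ∈ (S : Set _) := by
      intro g hg
      have hgT := hs hg
      simp only [genDirs, Finset.coe_image, Finset.coe_erase] at hgT
      obtain ⟨y, hy, rfl⟩ := hgT
      simpa using hy.1
    have hqP : q ∈ convexHull ℝ (S : Set _) := by
      refine (convex_convexHull ℝ _).sum_mem (fun g hg => div_nonneg (hc g hg) hM0)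
        ?_ (fun g hg => subset_convexHull ℝ _ (hgS g hg))
      rw [← Finset.sum_div, ← hM, div_self hMpos.ne']
    refine ⟨(M + 1)⁻¹, by positivity, ?_⟩
    have hMq : M • q = (∑ g ∈ s, c g • g) + M • v := by
      rw [hq, Finset.smul_sum]
      have hterm : ∀ g ∈ s, M • ((c g / M) • (g + v)) = c g • g + c g • v := by
        intro g hg
        have hMc : M * (c g / M) = c g := by field_simp
        rw [smul_smul, hMc, smul_add]
      rw [Finset.sum_congr rfl hterm, Finset.sum_add_distrib, ← Finset.sum_smul, ← hM]
    have hb0 : 0 ≤ (M + 1)⁻¹ * M := by positivity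
    have hb1 : (M + 1)⁻¹ * M ≤ 1 := by
      rw [inv_mul_le_iff₀ (by positivity)]; linarith
    have hmem := (convex_convexHull ℝ (S : Set (EuclideanSpace ℝ (Fin d)))) hvP hqP
      (sub_nonneg.2 hb1) hb0 (by ring)
    have heq : (1 - (M + 1)⁻¹ * M) • v + ((M + 1)⁻¹ * M) • q
        = v + (M + 1)⁻¹ • ∑ g ∈ s, c g • g := by
      linear_combination (norm := module) (M + 1)⁻¹ • hMq
    rwa [heq] at hmem

lemma edge_of_extremePoint
    (hv : v ∈ (convexHull ℝ (S : Set _)).extremePoints ℝ)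
    (hfT : ∀ g ∈ genDirs S v, 0 < f g) {b : EuclideanSpace ℝ (Fin d)}
    (hb : b ∈ (convexHull ℝ ((normBase (genDirs S v) f : Finset _) : Set _)).extremePoints ℝ) :
    ∃ w, v ≠ w ∧ IsExtreme ℝ (convexHull ℝ (S : Set (EuclideanSpace ℝ (Fin d)))) (segment ℝ v w) ∧
      ∃ t : ℝ, 0 ≤ t ∧ b = t • (w - v) := by
  classical
  set P := convexHull ℝ (S : Set (EuclideanSpace ℝ (Fin d))) with hPdef
  set T := genDirs S v with hTdef
  have hPconv : Convex ℝ P := convex_convexHull ℝ _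
  have hPcomp : IsCompact P := S.finite_toSet.isCompact_convexHull ℝ
  have hvP : v ∈ P := hv.1
  have hbB : b ∈ convexHull ℝ ((normBase T f : Finset _) : Set _) := hb.1
  have hbK : b ∈ coneOf (T : Set _) := base_sub_cone hfT hbB
  have hfb : f b = 1 := f_eq_one_on_base hfT hbB
  have hbne : b ≠ 0 := fun h => by simp [h] at hfb
  obtain ⟨ε, hε, hεP⟩ := ray_mem_polytope hvP hbK
  set A := {t : ℝ | 0 ≤ t ∧ v + t • b ∈ P} with hAdef
  have hAne : A.Nonempty := ⟨ε, hε.le, hεP⟩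
  have hAclosed : IsClosed A := by
    have hAeq : A = Set.Ici (0:ℝ) ∩ ((fun t : ℝ => v + t • b) ⁻¹' P) := by
      ext t; simp [hAdef, Set.mem_Ici]
    rw [hAeq]
    exact isClosed_Ici.inter (hPcomp.isClosed.preimage
      (continuous_const.add (continuous_id.smul continuous_const)))
  obtain ⟨r, hr⟩ := hPcomp.isBounded.subset_closedBall 0
  have hAbdd : BddAbove A := by
    refine ⟨(r + ‖v‖) / ‖b‖, fun t ht => ?_⟩
    have h1 : ‖v + t • b‖ ≤ r := by
      simpa [Metric.mem_closedBall, dist_zero_right] using hr ht.2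
    have h2 : ‖t • b‖ = t * ‖b‖ := by rw [norm_smul, Real.norm_of_nonneg ht.1]
    have h3 : ‖t • b‖ ≤ r + ‖v‖ := by
      have heq : t • b = (v + t • b) - v := by abel
      rw [heq]
      calc ‖(v + t • b) - v‖ ≤ ‖v + t • b‖ + ‖v‖ := norm_sub_le _ _
      _ ≤ r + ‖v‖ := by linarith
    rw [le_div_iff₀ (norm_pos_iff.2 hbne)]
    linarith
  set t₀ := sSup A with ht₀def
  have ht₀A : t₀ ∈ A := hAclosed.csSup_mem hAne hAbdd
  have ht₀pos : 0 < t₀ := lt_of_lt_of_le hε (le_csSup hAbdd ⟨hε.le, hεP⟩)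
  set w := v + t₀ • b with hwdef
  have hseg : ∀ s : ℝ, 0 ≤ s → v + s • b ∈ P → v + s • b ∈ segment ℝ v w := by
    intro s hs hsP
    have hst₀ : s ≤ t₀ := le_csSup hAbdd ⟨hs, hsP⟩
    have hdiv : s / t₀ ≤ 1 := (div_le_one ht₀pos).2 hst₀
    refine ⟨1 - s / t₀, s / t₀, by linarith, by positivity, by ring, ?_⟩
    have hc : s / t₀ * t₀ = s := div_mul_cancel₀ _ ht₀pos.ne'
    rw [hwdef]
    linear_combination (norm := module) hc • b
  have hseg' : ∀ z ∈ segment ℝ v w, ∃ s : ℝ, 0 ≤ s ∧ z = v + s • b := by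
    rintro z ⟨a, c, ha, hc, hac, rfl⟩
    refine ⟨c * t₀, by positivity, ?_⟩
    rw [hwdef]
    linear_combination (norm := module) hac • v
  have hKP : ∀ z ∈ P, z - v ∈ coneOf (T : Set _) := fun z hz => sub_mem_coneOf_gen hz
  refine ⟨w, ?_, ⟨hPconv.segment_subset hvP ht₀A.2, ?_⟩, t₀⁻¹, inv_nonneg.2 ht₀pos.le, ?_⟩
  · intro h
    apply hbne
    have h0 : t₀ • b = 0 := by
      have := h.symm
      rw [hwdef] at this
      simpa using this
    rcases smul_eq_zero.1 h0 with h' | h'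
    · exact absurd h' ht₀pos.ne'
    · exact h'
  · intro x₁ hx₁ x₂ hx₂ y hyseg hyopen
    suffices hboth : x₁ ∈ segment ℝ v w ∧ x₂ ∈ segment ℝ v w from hboth.1
    obtain ⟨s, hs0, rfl⟩ := hseg' y hyseg
    obtain ⟨α, β, hα, hβ, hαβ, heq⟩ := hyopen
    have hp : x₁ - v ∈ coneOf (T : Set _) := hKP _ hx₁
    have hq : x₂ - v ∈ coneOf (T : Set _) := hKP _ hx₂
    have hfp := cone_f_pos hfT hp
    have hfq := cone_f_pos hfT hq
    have hkey : s • b = α • (x₁ - v) + β • (x₂ - v) := by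
      linear_combination (norm := module) -heq + hαβ • v
    have hsum : s = α * f (x₁ - v) + β * f (x₂ - v) := by
      have hcg := congrArg f hkey
      simpa [map_add, map_smul, hfb, smul_eq_mul] using hcg
    by_cases hfp0 : f (x₁ - v) = 0
    · have hx₁v : x₁ = v := by
        have := hfp.2 hfp0
        rwa [sub_eq_zero] at this
      refine ⟨by rw [hx₁v]; exact left_mem_segment ℝ v w, ?_⟩
      have hkey2 : β • (x₂ - v) = s • b := by
        rw [hkey, hx₁v]; simp
      have hx₂eq : x₂ = v + (β⁻¹ * s) • b := by
        have h5 : x₂ - v = (β⁻¹ * s) • b := by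
          rw [mul_smul, ← hkey2, smul_smul, inv_mul_cancel₀ hβ.ne', one_smul]
        linear_combination (norm := module) h5
      have hmem := hseg (β⁻¹ * s) (mul_nonneg (inv_nonneg.2 hβ.le) hs0)
        (by rw [← hx₂eq]; exact hx₂)
      rwa [← hx₂eq] at hmem
    by_cases hfq0 : f (x₂ - v) = 0
    · have hx₂v : x₂ = v := by
        have := hfq.2 hfq0
        rwa [sub_eq_zero] at this
      refine ⟨?_, by rw [hx₂v]; exact left_mem_segment ℝ v w⟩
      have hkey2 : α • (x₁ - v) = s • b := by
        rw [hkey, hx₂v]; simp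
      have hx₁eq : x₁ = v + (α⁻¹ * s) • b := by
        have h5 : x₁ - v = (α⁻¹ * s) • b := by
          rw [mul_smul, ← hkey2, smul_smul, inv_mul_cancel₀ hα.ne', one_smul]
        linear_combination (norm := module) h5
      have hmem := hseg (α⁻¹ * s) (mul_nonneg (inv_nonneg.2 hα.le) hs0)
        (by rw [← hx₁eq]; exact hx₁)
      rwa [← hx₁eq] at hmem
    · have hfppos : 0 < f (x₁ - v) := hfp.1.lt_of_ne (Ne.symm hfp0)
      have hfqpos : 0 < f (x₂ - v) := hfq.1.lt_of_ne (Ne.symm hfq0)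
      have hspos : 0 < s := by
        rw [hsum]
        have := mul_pos hα hfppos
        have := mul_pos hβ hfqpos
        linarith
      have hx₁0 : x₁ - v ≠ 0 := fun h => hfp0 (by rw [h]; simp)
      have hx₂0 : x₂ - v ≠ 0 := fun h => hfq0 (by rw [h]; simp)
      have hp1 : (f (x₁ - v))⁻¹ • (x₁ - v) ∈ convexHull ℝ ((normBase T f : Finset _) : Set _) :=
        normalized_mem_base hfT hp hx₁0
      have hq1 : (f (x₂ - v))⁻¹ • (x₂ - v) ∈ convexHull ℝ ((normBase T f : Finset _) : Set _) :=
        normalized_mem_base hfT hq hx₂0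
      have hbopen : b ∈ openSegment ℝ ((f (x₁ - v))⁻¹ • (x₁ - v)) ((f (x₂ - v))⁻¹ • (x₂ - v)) := by
        refine ⟨s⁻¹ * α * f (x₁ - v), s⁻¹ * β * f (x₂ - v),
          by positivity, by positivity, ?_, ?_⟩
        · calc s⁻¹ * α * f (x₁ - v) + s⁻¹ * β * f (x₂ - v)
              = s⁻¹ * (α * f (x₁ - v) + β * f (x₂ - v)) := by ring
          _ = s⁻¹ * s := by rw [← hsum]
          _ = 1 := inv_mul_cancel₀ hspos.ne'
        · rw [smul_smul, smul_smul]
          have e1 : s⁻¹ * α * f (x₁ - v) * (f (x₁ - v))⁻¹ = s⁻¹ * α := by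
            rw [mul_assoc, mul_inv_cancel₀ hfppos.ne', mul_one]
          have e2 : s⁻¹ * β * f (x₂ - v) * (f (x₂ - v))⁻¹ = s⁻¹ * β := by
            rw [mul_assoc, mul_inv_cancel₀ hfqpos.ne', mul_one]
          rw [e1, e2]
          have hinv : s⁻¹ * s = 1 := inv_mul_cancel₀ hspos.ne'
          linear_combination (norm := module) hinv • b - s⁻¹ • hkey
      have h1 := hb.2 hp1 hq1 hbopen
      have h2 := hb.2 hq1 hp1 (by rw [openSegment_symm]; exact hbopen)
      have hx₁eq : x₁ = v + (f (x₁ - v)) • b := by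
        have h5 : (f (x₁ - v)) • ((f (x₁ - v))⁻¹ • (x₁ - v)) = x₁ - v := by
          rw [smul_smul, mul_inv_cancel₀ hfppos.ne', one_smul]
        rw [h1] at h5
        linear_combination (norm := module) -h5
      have hx₂eq : x₂ = v + (f (x₂ - v)) • b := by
        have h5 : (f (x₂ - v)) • ((f (x₂ - v))⁻¹ • (x₂ - v)) = x₂ - v := by
          rw [smul_smul, mul_inv_cancel₀ hfqpos.ne', one_smul]
        rw [h2] at h5
        linear_combination (norm := module) -h5
      constructor
      · have hmem := hseg (f (x₁ - v)) hfppos.le (by rw [← hx₁eq]; exact hx₁)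
        rwa [← hx₁eq] at hmem
      · have hmem := hseg (f (x₂ - v)) hfqpos.le (by rw [← hx₂eq]; exact hx₂)
        rwa [← hx₂eq] at hmem
  · rw [hwdef, add_sub_cancel_left, smul_smul, inv_mul_cancel₀ ht₀pos.ne', one_smul]

theorem polytope_subset_vertex_cone {d : ℕ}
    (P : Set (EuclideanSpace ℝ (Fin d))) (hP : IsPolytope P)
    (v : EuclideanSpace ℝ (Fin d)) (hv : v ∈ Set.extremePoints ℝ P) :
    ∀ x ∈ P, x - v ∈ coneOf {u | ∃ w, IsEdge P v w ∧ u = w - v} := by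
  classical
  obtain ⟨S, hSne, rfl⟩ := hP
  intro x hx
  have h0 := zero_not_mem_genHull hv
  obtain ⟨f, u₀, hfu₀, hfsep⟩ := geometric_hahn_banach_point_closed
    (convex_convexHull ℝ _) ((genDirs S v).finite_toSet.isCompact_convexHull ℝ).isClosed h0
  have hu₀ : (0:ℝ) < u₀ := by simpa using hfu₀
  have hfT : ∀ g ∈ genDirs S v, 0 < f g := fun g hg =>
    hu₀.trans (hfsep g (subset_convexHull ℝ _ hg))
  have hkK : x - v ∈ coneOf ((genDirs S v : Finset _) : Set _) := sub_mem_coneOf_gen hx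
  by_cases hk0 : x - v = 0
  · rw [hk0]; exact coneOf_zero_mem
  · have hfk : 0 < f (x - v) := by
      rcases cone_f_pos hfT hkK with ⟨h1, h2⟩
      rcases h1.lt_or_eq with h | h
      · exact h
      · exact absurd (h2 h.symm) hk0
    have hkn : (f (x - v))⁻¹ • (x - v)
        ∈ convexHull ℝ ((normBase (genDirs S v) f : Finset _) : Set _) :=
      normalized_mem_base hfT hkK hk0
    set T₁ := normBase (genDirs S v) f with hT₁
    set B := convexHull ℝ ((T₁ : Finset _) : Set (EuclideanSpace ℝ (Fin d))) with hB
    have hBcomp : IsCompact B := T₁.finite_toSet.isCompact_convexHull ℝ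
    have hext : B.extremePoints ℝ ⊆ (T₁ : Set _) := extremePoints_convexHull_subset
    have hBKM : convexHull ℝ (B.extremePoints ℝ) = B := by
      have hfin : (B.extremePoints ℝ).Finite := T₁.finite_toSet.subset hext
      have hcl : IsClosed (convexHull ℝ (B.extremePoints ℝ)) :=
        (hfin.isCompact_convexHull ℝ).isClosed
      calc convexHull ℝ (B.extremePoints ℝ)
          = closure (convexHull ℝ (B.extremePoints ℝ)) := hcl.closure_eq.symm
      _ = B := closure_convexHull_extremePoints hBcomp (convex_convexHull ℝ _)
    set F := T₁.filter (fun y => y ∈ B.extremePoints ℝ) with hF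
    have hFeq : ((F : Finset _) : Set (EuclideanSpace ℝ (Fin d))) = B.extremePoints ℝ := by
      ext y
      simp only [hF, Finset.coe_filter, Set.mem_setOf_eq]
      exact ⟨fun h => h.2, fun h => ⟨Finset.mem_coe.1 (hext h), h⟩⟩
    have hmem : (f (x - v))⁻¹ • (x - v) ∈ convexHull ℝ ((F : Finset _) : Set _) := by
      rw [hFeq, hBKM]; exact hkn
    obtain ⟨μ, hμ0, hμ1, hμeq⟩ := Finset.mem_convexHull'.1 hmem
    have hkeq : x - v = ∑ y ∈ F, (f (x - v) * μ y) • y := by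
      calc x - v = f (x - v) • ((f (x - v))⁻¹ • (x - v)) := by
            rw [smul_smul, mul_inv_cancel₀ hfk.ne', one_smul]
      _ = ∑ y ∈ F, (f (x - v) * μ y) • y := by
            rw [← hμeq, Finset.smul_sum]
            refine Finset.sum_congr rfl fun y hy => ?_
            rw [smul_smul]
    rw [hkeq]
    refine coneOf_sum_mem _ _ fun y hy => ?_
    have hyext : y ∈ B.extremePoints ℝ := by rw [← hFeq]; exact Finset.mem_coe.2 hy
    obtain ⟨w, hne, hextr, t, ht, rfl⟩ := edge_of_extremePoint hv hfT hyext
    rw [smul_smul]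
    have hwmem : w - v ∈ {u | ∃ w', IsEdge (convexHull ℝ (S : Set (EuclideanSpace ℝ (Fin d)))) v w' ∧ u = w' - v} :=
      ⟨w, ⟨hne, hextr⟩, rfl⟩
    exact coneOf_smul_gen hwmem (mul_nonneg (mul_nonneg hfk.le (hμ0 _ hy)) ht)
end

section
/- Let P, Q ⊆ ℝ^d be polytopes. Then every edge direction of the Minkowski sum P + Q is an edge direction of P or an edge direction of Q; that is, every edge of P + Q is parallel to an edge of P or to an edge of Q. -/
open scoped Pointwise

lemma isEdgeDir_smul {d : ℕ} {P : Set (EuclideanSpace ℝ (Fin d))}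
    {x : EuclideanSpace ℝ (Fin d)} (h : IsEdgeDir P x) {c : ℝ} (hc : 0 < c) :
    IsEdgeDir P (c • x) := by
  obtain ⟨v, w, hvw, t, ht, rfl⟩ := h
  exact ⟨v, w, hvw, c * t, mul_pos hc ht, (smul_smul c t _)⟩

/-- An extreme subset of the first summand extracted from an extreme subset of a
Minkowski sum. -/
lemma extreme_factor {d : ℕ} (P Q F : Set (EuclideanSpace ℝ (Fin d)))
    (hF : IsExtreme ℝ (P + Q) F) :
    IsExtreme ℝ P {p ∈ P | ∃ q ∈ Q, p + q ∈ F} := by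
  constructor
  · exact fun p hp => hp.1
  · rintro x1 hx1 x2 hx2 x ⟨hxP, q, hqQ, hxqF⟩ hxseg
    obtain ⟨a, b, ha, hb, hab, hx⟩ := hxseg
    have h1 : x1 + q ∈ P + Q := Set.add_mem_add hx1 hqQ
    have h2 : x2 + q ∈ P + Q := Set.add_mem_add hx2 hqQ
    have hmem : x + q ∈ openSegment ℝ (x1 + q) (x2 + q) := by
      refine ⟨a, b, ha, hb, hab, ?_⟩
      have : a • (x1 + q) + b • (x2 + q) = (a • x1 + b • x2) + (a + b) • q := by
        module
      rw [this, hab, one_smul, hx]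
    have := hF.2 h1 h2 hxqF hmem
    exact ⟨hx1, q, hqQ, this⟩

lemma sum_mem_face {d : ℕ} (P Q F : Set (EuclideanSpace ℝ (Fin d)))
    (hF : IsExtreme ℝ (P + Q) F) (hFconv : Convex ℝ F)
    {p q : EuclideanSpace ℝ (Fin d)}
    (hp : p ∈ {p ∈ P | ∃ q ∈ Q, p + q ∈ F})
    (hq : q ∈ {q ∈ Q | ∃ p ∈ P, p + q ∈ F}) : p + q ∈ F := by
  obtain ⟨hpP, q1, hq1Q, hpq1⟩ := hp
  obtain ⟨hqQ, p1, hp1P, hp1q⟩ := hq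
  have hm : (1/2 : ℝ) • (p + q1) + (1/2 : ℝ) • (p1 + q) ∈ F :=
    hFconv hpq1 hp1q (by norm_num) (by norm_num) (by norm_num)
  have hm' : (1/2 : ℝ) • (p + q1) + (1/2 : ℝ) • (p1 + q)
      = (1/2 : ℝ) • (p + q) + (1/2 : ℝ) • (p1 + q1) := by module
  have hseg : (1/2 : ℝ) • (p + q1) + (1/2 : ℝ) • (p1 + q)
      ∈ openSegment ℝ (p + q) (p1 + q1) := by
    refine ⟨1/2, 1/2, by norm_num, by norm_num, by norm_num, hm'.symm⟩
  exact (hF.2 (Set.add_mem_add hpP hqQ) (Set.add_mem_add hp1P hq1Q) hm hseg)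

/-- If a compact convex extreme subset of `P` lies on a line with direction `e0`
and is not a single point, then `e0` is an edge direction of `P`. -/
lemma edge_dir_of_line {d : ℕ} (P G : Set (EuclideanSpace ℝ (Fin d)))
    (hext : IsExtreme ℝ P G) (hconv : Convex ℝ G) (hcpt : IsCompact G)
    (p₀ e0 : EuclideanSpace ℝ (Fin d))
    (hsub : ∀ p ∈ G, ∃ t : ℝ, p = p₀ + t • e0)
    (hnt : G.Nontrivial) : IsEdgeDir P e0 := by
  obtain ⟨x, hx, y, hy, hxy⟩ := hnt
  obtain ⟨t1, ht1⟩ := hsub x hx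
  obtain ⟨t2, ht2⟩ := hsub y hy
  have he0 : e0 ≠ 0 := by
    rintro rfl
    simp only [smul_zero, add_zero] at ht1 ht2
    exact hxy (ht1.trans ht2.symm)
  set T : Set ℝ := {t : ℝ | p₀ + t • e0 ∈ G} with hT
  have ht1T : t1 ∈ T := by rw [hT]; simpa [← ht1] using hx
  have ht2T : t2 ∈ T := by rw [hT]; simpa [← ht2] using hy
  have ht12 : t1 ≠ t2 := by
    rintro rfl; exact hxy (ht1.trans ht2.symm)
  -- T is compact: it is the image of G under a continuous map
  have hinner : (inner ℝ e0 e0 : ℝ) ≠ 0 := inner_self_ne_zero.mpr he0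
  have hψ : ∀ s : ℝ, (inner ℝ e0 ((p₀ + s • e0) - p₀) : ℝ) / (inner ℝ e0 e0 : ℝ) = s := by
    intro s
    rw [add_sub_cancel_left, real_inner_smul_right, mul_div_assoc, div_self hinner,
      mul_one]
  have hTim : T = (fun p => (inner ℝ e0 (p - p₀) : ℝ) / (inner ℝ e0 e0 : ℝ)) '' G := by
    ext t
    constructor
    · intro htT
      exact ⟨p₀ + t • e0, htT, hψ t⟩
    · rintro ⟨p, hpG, hp⟩
      obtain ⟨s, rfl⟩ := hsub p hpG
      have : (fun p => (inner ℝ e0 (p - p₀) : ℝ) / (inner ℝ e0 e0 : ℝ)) (p₀ + s • e0) = s := hψ s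
      rw [this] at hp
      subst hp
      exact hpG
  have hTcpt : IsCompact T := by
    rw [hTim]
    exact hcpt.image <| (continuous_const.inner (continuous_id.sub continuous_const)).div_const _
  have hTconv : Convex ℝ T := by
    intro s1 hs1 s2 hs2 a b ha hb hab
    show p₀ + (a • s1 + b • s2) • e0 ∈ G
    have h : a • (p₀ + s1 • e0) + b • (p₀ + s2 • e0)
        = (a + b) • p₀ + (a • s1 + b • s2) • e0 := by
      simp only [smul_eq_mul]; module
    have := hconv hs1 hs2 ha hb hab
    rwa [h, hab, one_smul] at this
  have hTne : T.Nonempty := ⟨t1, ht1T⟩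
  set a := sInf T with ha
  set b := sSup T with hb
  have haT : a ∈ T := hTcpt.sInf_mem hTne
  have hbT : b ∈ T := hTcpt.sSup_mem hTne
  have hbdd : BddAbove T := hTcpt.bddAbove
  have hbdd' : BddBelow T := hTcpt.bddBelow
  have hTIcc : T = Set.Icc a b := by
    apply subset_antisymm
    · exact fun t ht => ⟨csInf_le hbdd' ht, le_csSup hbdd ht⟩
    · exact hTconv.ordConnected.out haT hbT
  have haltb : a < b := by
    rcases eq_or_lt_of_le ((csInf_le hbdd' ht1T).trans (le_csSup hbdd ht1T)) with h | h
    · exfalso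
      have e1 : t1 = a := le_antisymm (by rw [ha, h, ← hb]; exact le_csSup hbdd ht1T) (csInf_le hbdd' ht1T)
      have e2 : t2 = a := le_antisymm (by rw [ha, h, ← hb]; exact le_csSup hbdd ht2T) (csInf_le hbdd' ht2T)
      exact ht12 (e1.trans e2.symm)
    · exact h
  set A := p₀ + a • e0 with hA
  set B := p₀ + b • e0 with hB
  have hBA : B - A = (b - a) • e0 := by rw [hA, hB]; module
  have hABne : A ≠ B := by
    intro h
    have : (b - a) • e0 = 0 := by rw [← hBA, h, sub_self]
    rcases smul_eq_zero.mp this with h' | h'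
    · exact (sub_ne_zero.mpr haltb.ne') h'
    · exact he0 h'
  have hG : G = segment ℝ A B := by
    apply subset_antisymm
    · intro p hp
      obtain ⟨t, rfl⟩ := hsub p hp
      have htT : t ∈ T := hp
      rw [hTIcc] at htT
      rw [segment_eq_image']
      refine ⟨(t - a) / (b - a), ⟨div_nonneg (sub_nonneg.mpr htT.1) (sub_nonneg.mpr haltb.le),
        div_le_one_of_le₀ (sub_le_sub_right htT.2 a) (sub_nonneg.mpr haltb.le)⟩, ?_⟩
      have : A + ((t - a) / (b - a)) • (B - A) = p₀ + t • e0 := by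
        rw [hBA, smul_smul, div_mul_cancel₀ _ (sub_ne_zero.mpr haltb.ne'), hA]
        module
      exact this
    · exact hconv.segment_subset haT hbT
  have hedge : IsEdge P A B := ⟨hABne, hG ▸ hext⟩
  refine ⟨A, B, hedge, (b - a)⁻¹, inv_pos.mpr (sub_pos.mpr haltb), ?_⟩
  rw [hBA, smul_smul, inv_mul_cancel₀ (sub_ne_zero.mpr haltb.ne'), one_smul]

theorem minkowski_sum_edge_directions {d : ℕ}
    (P Q : Set (EuclideanSpace ℝ (Fin d))) (hP : IsPolytope P) (hQ : IsPolytope Q) :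
    ∀ e, IsEdgeDir (P + Q) e → IsEdgeDir P e ∨ IsEdgeDir Q e := by
  obtain ⟨SP, hSPne, rfl⟩ := hP
  obtain ⟨SQ, hSQne, rfl⟩ := hQ
  set P := convexHull ℝ (SP : Set (EuclideanSpace ℝ (Fin d)))
  set Q := convexHull ℝ (SQ : Set (EuclideanSpace ℝ (Fin d)))
  have hPcpt : IsCompact P := SP.finite_toSet.isCompact_convexHull ℝ
  have hQcpt : IsCompact Q := SQ.finite_toSet.isCompact_convexHull ℝ
  have hPconv : Convex ℝ P := convex_convexHull ℝ _
  have hQconv : Convex ℝ Q := convex_convexHull ℝ _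
  rintro e ⟨v, w, ⟨hvw, hF⟩, t, ht, rfl⟩
  set F := segment ℝ v w with hFdef
  have hFconv : Convex ℝ F := convex_segment v w
  have hFclosed : IsClosed F := by
    rw [hFdef, ← convexHull_pair]
    exact (((Set.finite_singleton w).insert v).isCompact_convexHull ℝ).isClosed
  set e0 := w - v with he0def
  have he0 : e0 ≠ 0 := sub_ne_zero.mpr (Ne.symm hvw)
  -- decompose v and w
  obtain ⟨p₀, hp₀, q₀, hq₀, hv⟩ := hF.1 (left_mem_segment ℝ v w)
  obtain ⟨p1, hp1, q1, hq1, hw⟩ := hF.1 (right_mem_segment ℝ v w)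
  replace hv : p₀ + q₀ = v := hv
  replace hw : p1 + q1 = w := hw
  set FP : Set (EuclideanSpace ℝ (Fin d)) := {p ∈ P | ∃ q ∈ Q, p + q ∈ F} with hFP
  set FQ : Set (EuclideanSpace ℝ (Fin d)) := {q ∈ Q | ∃ p ∈ P, p + q ∈ F} with hFQ
  have hextP : IsExtreme ℝ P FP := extreme_factor P Q F hF
  have hextQ : IsExtreme ℝ Q FQ := by
    have hF' : IsExtreme ℝ (Q + P) F := by rwa [add_comm]
    have := extreme_factor Q P F hF'
    convert this using 1
    ext q
    simp only [hFQ, Set.mem_setOf_eq]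
    constructor
    · rintro ⟨hq, p, hp, hpq⟩; exact ⟨hq, p, hp, by rwa [add_comm]⟩
    · rintro ⟨hq, p, hp, hpq⟩; exact ⟨hq, p, hp, by rwa [add_comm]⟩
  have hp₀FP : p₀ ∈ FP := ⟨hp₀, q₀, hq₀, by rw [hv]; exact left_mem_segment ℝ v w⟩
  have hq₀FQ : q₀ ∈ FQ := ⟨hq₀, p₀, hp₀, by rw [hv]; exact left_mem_segment ℝ v w⟩
  have hp1FP : p1 ∈ FP := ⟨hp1, q1, hq1, by rw [hw]; exact right_mem_segment ℝ v w⟩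
  have hq1FQ : q1 ∈ FQ := ⟨hq1, p1, hp1, by rw [hw]; exact right_mem_segment ℝ v w⟩
  -- rewrite FP, FQ without the existential
  have hFPeq : FP = P ∩ (· + q₀) ⁻¹' F := by
    apply subset_antisymm
    · intro p hp
      exact ⟨hp.1, sum_mem_face P Q F hF hFconv hp hq₀FQ⟩
    · rintro p ⟨hpP, hpq⟩
      exact ⟨hpP, q₀, hq₀, hpq⟩
  have hFQeq : FQ = Q ∩ (p₀ + ·) ⁻¹' F := by
    apply subset_antisymm
    · intro q hq
      exact ⟨hq.1, sum_mem_face P Q F hF hFconv hp₀FP hq⟩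
    · rintro q ⟨hqQ, hpq⟩
      exact ⟨hqQ, p₀, hp₀, hpq⟩
  have hFPcpt : IsCompact FP := by
    rw [hFPeq]
    exact hPcpt.inter_right (hFclosed.preimage (continuous_id.add continuous_const))
  have hFQcpt : IsCompact FQ := by
    rw [hFQeq]
    exact hQcpt.inter_right (hFclosed.preimage (continuous_const.add continuous_id))
  have hFPconv : Convex ℝ FP := by
    rw [hFPeq]
    refine hPconv.inter ?_
    intro x hx y hy a b ha hb hab
    show (a • x + b • y) + q₀ ∈ F
    have h : a • (x + q₀) + b • (y + q₀) = (a • x + b • y) + (a + b) • q₀ := by module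
    have := hFconv hx hy ha hb hab
    rwa [h, hab, one_smul] at this
  have hFQconv : Convex ℝ FQ := by
    rw [hFQeq]
    refine hQconv.inter ?_
    intro x hx y hy a b ha hb hab
    show p₀ + (a • x + b • y) ∈ F
    have h : a • (p₀ + x) + b • (p₀ + y) = (a + b) • p₀ + (a • x + b • y) := by module
    have := hFconv hx hy ha hb hab
    rwa [h, hab, one_smul] at this
  -- points of F lie on the line through v in direction e0
  have hFline : ∀ z ∈ F, ∃ t : ℝ, z = v + t • e0 := by
    intro z hz
    rw [hFdef, segment_eq_image'] at hz
    obtain ⟨θ, _, rfl⟩ := hz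
    exact ⟨θ, rfl⟩
  have hsubP : ∀ p ∈ FP, ∃ t : ℝ, p = p₀ + t • e0 := by
    intro p hp
    have : p + q₀ ∈ F := sum_mem_face P Q F hF hFconv hp hq₀FQ
    obtain ⟨s, hs⟩ := hFline _ this
    refine ⟨s, ?_⟩
    have : p + q₀ = (p₀ + s • e0) + q₀ := by rw [hs, ← hv]; module
    exact add_right_cancel this
  have hsubQ : ∀ q ∈ FQ, ∃ t : ℝ, q = q₀ + t • e0 := by
    intro q hq
    have : p₀ + q ∈ F := sum_mem_face P Q F hF hFconv hp₀FP hq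
    obtain ⟨s, hs⟩ := hFline _ this
    refine ⟨s, ?_⟩
    have : p₀ + q = p₀ + (q₀ + s • e0) := by rw [hs, ← hv]; module
    exact add_left_cancel this
  -- not both FP and FQ are subsingletons
  by_cases hnt : FP.Nontrivial
  · left
    have : IsEdgeDir P e0 := edge_dir_of_line P FP hextP hFPconv hFPcpt p₀ e0 hsubP hnt
    exact isEdgeDir_smul this ht
  · right
    have hFQnt : FQ.Nontrivial := by
      rw [Set.not_nontrivial_iff] at hnt
      have hpp : p1 = p₀ := hnt hp1FP hp₀FP
      refine ⟨q1, hq1FQ, q₀, hq₀FQ, ?_⟩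
      intro h
      apply hvw
      rw [← hv, ← hw, hpp, h]
    have : IsEdgeDir Q e0 := edge_dir_of_line Q FQ hextQ hFQconv hFQcpt q₀ e0 hsubQ hFQnt
    exact isEdgeDir_smul this ht
end

section
/- Let A, B, C ⊆ ℝ^d be polytopes with A = B + C (Minkowski sum), i.e. C is the Minkowski difference A − B. Then every edge direction of C is also an edge direction of A. -/
open Set
open scoped Pointwise

/-- If `F` is extreme in convex `C` and `y ∈ F` lies in the convex hull of a finite
subset of `C`, then `y` lies in the hull of the generators belonging to `F`. -/
lemma extreme_convexHull_inter {E : Type*} [AddCommGroup E] [Module ℝ E]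
    {C F : Set E} (hC : Convex ℝ C) (hF : IsExtreme ℝ C F) :
    ∀ s : Finset E, ↑s ⊆ C → ∀ y ∈ F, y ∈ convexHull ℝ (s : Set E) →
      y ∈ convexHull ℝ ((s : Set E) ∩ F) := by
  classical
  intro s
  induction s using Finset.strongInduction with
  | _ s ih =>
    intro hsC y hyF hy
    by_cases hall : (s : Set E) ⊆ F
    · rwa [Set.inter_eq_self_of_subset_left hall]
    · obtain ⟨a, haS, haF⟩ := not_subset.1 hall
      have haS' : a ∈ s := haS
      rw [← Finset.insert_erase haS', Finset.coe_insert] at hy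
      rcases (s.erase a : Set E).eq_empty_or_nonempty with he | he
      · rw [he] at hy
        simp only [insert_empty_eq, convexHull_singleton, Set.mem_singleton_iff] at hy
        exact absurd (hy ▸ hyF) haF
      · rw [convexHull_insert he, mem_convexJoin] at hy
        obtain ⟨p, hp, z, hz, hyz⟩ := hy
        obtain rfl : a = p := hp.symm
        have hzC : z ∈ C :=
          convexHull_min (Set.Subset.trans (by simp [Finset.coe_subset, Finset.erase_subset]
            ) hsC) hC hz
        rw [← insert_endpoints_openSegment, Set.mem_insert_iff, Set.mem_insert_iff] at hyz
        rcases hyz with h | h | hyz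
        · exact absurd (h ▸ hyF) haF
        · subst h
          have := ih (s.erase a) (Finset.erase_ssubset haS')
            (Set.Subset.trans (by exact_mod_cast Finset.coe_subset.2 (Finset.erase_subset a s)) hsC)
            y hyF hz
          exact convexHull_mono (Set.inter_subset_inter_left _
            (by exact_mod_cast Finset.coe_subset.2 (Finset.erase_subset a s))) this
        · exact absurd (hF.2 (hsC haS) hzC hyF hyz) haF


variable {E : Type*}

lemma seg_extreme_left [AddCommGroup E] [Module ℝ E]
    (v w : E) (hvw : v ≠ w) : IsExtreme ℝ (segment ℝ v w) {v} := by
  rw [isExtreme_singleton]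
  rw [mem_extremePoints_iff_forall_segment]
  refine ⟨left_mem_segment ℝ v w, ?_⟩
  intro x₁ hx₁ x₂ hx₂ hv
  rw [segment_eq_image'] at hx₁ hx₂
  obtain ⟨a, ha, rfl⟩ := hx₁
  obtain ⟨b, hb, rfl⟩ := hx₂
  rw [segment_eq_image'] at hv
  obtain ⟨c, hc, hv⟩ := hv
  have huv : w - v ≠ 0 := sub_ne_zero.2 hvw.symm
  have hz : (a + c * (b - a)) • (w - v) = 0 := by
    have h := hv
    simp only at h
    have h2 : (a + c * (b - a)) • (w - v)
        = (v + a • (w - v) + c • (v + b • (w - v) - (v + a • (w - v)))) - v := by module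
    rw [h2, h, sub_self]
  rw [smul_eq_zero] at hz
  rcases hz with hz | hz
  · have h2 : a * (1 - c) + c * b = 0 := by nlinarith [hz]
    have hac : a * (1 - c) = 0 ∧ c * b = 0 := by
      constructor <;> nlinarith [mul_nonneg ha.1 (by linarith [hc.2] : (0:ℝ) ≤ 1 - c),
        mul_nonneg hc.1 hb.1]
    rcases mul_eq_zero.1 hac.1 with h | h
    · left; simp [h]
    · right
      have hb0 : b = 0 := by
        rcases mul_eq_zero.1 hac.2 with h' | h'
        · linarith
        · exact h'
      simp [hb0]
  · exact absurd hz huv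

lemma face_convexHull [NormedAddCommGroup E] [InnerProductSpace ℝ E]
    (s : Finset E) (l : E →L[ℝ] ℝ) (M : ℝ)
    (hM : ∀ a ∈ s, l a ≤ M) (hMa : ∃ a ∈ s, l a = M) :
    {x ∈ convexHull ℝ (s : Set E) | ∀ y ∈ convexHull ℝ (s : Set E), l y ≤ l x}
      = convexHull ℝ ((s : Set E) ∩ {x | l x = M}) := by
  have hlin : IsLinearMap ℝ fun x : E => l x := ⟨l.map_add, l.map_smul⟩
  have hhalf : ∀ y ∈ convexHull ℝ (s : Set E), l y ≤ M := fun y hy =>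
    convexHull_min (fun a ha => hM a ha) (convex_halfSpace_le hlin M) hy
  have hFex : IsExposed ℝ (convexHull ℝ (s : Set E))
      {x ∈ convexHull ℝ (s : Set E) | ∀ y ∈ convexHull ℝ (s : Set E), l y ≤ l x} :=
    fun _ => ⟨l, rfl⟩
  obtain ⟨a₀, ha₀S, ha₀M⟩ := hMa
  have key : ∀ x ∈ convexHull ℝ (s : Set E),
      (∀ y ∈ convexHull ℝ (s : Set E), l y ≤ l x) → l x = M := by
    intro x hx hmax
    exact le_antisymm (hhalf x hx) (ha₀M ▸ hmax a₀ (subset_convexHull ℝ _ ha₀S))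
  apply Set.Subset.antisymm
  · intro x hx
    have := extreme_convexHull_inter (convex_convexHull ℝ _) hFex.isExtreme s
      (subset_convexHull ℝ _) x hx hx.1
    refine convexHull_mono ?_ this
    rintro a ⟨haS, haF⟩
    exact ⟨haS, key a haF.1 haF.2⟩
  · intro x hx
    have hxs : x ∈ convexHull ℝ (s : Set E) :=
      convexHull_mono Set.inter_subset_left hx
    have hxM : l x = M :=
      convexHull_min (fun a ha => ha.2) (convex_hyperplane hlin M) hx
    exact ⟨hxs, fun y hy => hxM ▸ hhalf y hy⟩

section proj
variable {E : Type*} [NormedAddCommGroup E] [InnerProductSpace ℝ E]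

open RealInnerProductSpace

/-- Projection along `u` onto the orthogonal complement of `u`. -/
noncomputable def projC (u : E) : E →L[ℝ] E :=
  ContinuousLinearMap.id ℝ E - (‖u‖ ^ 2)⁻¹ • ((innerSL ℝ u).smulRight u)

lemma projC_apply (u x : E) : projC u x = x - ((‖u‖ ^ 2)⁻¹ * ⟪u, x⟫) • u := by
  simp [projC, ContinuousLinearMap.sub_apply, ContinuousLinearMap.smul_apply,
    ContinuousLinearMap.smulRight_apply, smul_smul]

lemma projC_self (u : E) : projC u u = 0 := by
  rcases eq_or_ne u 0 with rfl | hu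
  · simp [projC_apply]
  · rw [projC_apply, real_inner_self_eq_norm_sq,
      inv_mul_cancel₀ (pow_ne_zero 2 (norm_ne_zero_iff.2 hu)), one_smul, sub_self]

lemma projC_add_smul (u x : E) (r : ℝ) : projC u (x + r • u) = projC u x := by
  rw [map_add, map_smul, projC_self, smul_zero, add_zero]

lemma eq_add_smul_of_projC_eq {u x y : E} (h : projC u x = projC u y) :
    x = y + ((‖u‖ ^ 2)⁻¹ * (⟪u, x⟫ - ⟪u, y⟫)) • u := by
  rw [projC_apply, projC_apply] at h
  rw [mul_sub, sub_smul]
  have h2 : x - ((‖u‖ ^ 2)⁻¹ * ⟪u, x⟫) • u + ((‖u‖ ^ 2)⁻¹ * ⟪u, x⟫) • u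
      = y - ((‖u‖ ^ 2)⁻¹ * ⟪u, y⟫) • u + ((‖u‖ ^ 2)⁻¹ * ⟪u, x⟫) • u := by rw [h]
  rw [sub_add_cancel] at h2
  calc x = y - ((‖u‖ ^ 2)⁻¹ * ⟪u, y⟫) • u + ((‖u‖ ^ 2)⁻¹ * ⟪u, x⟫) • u := h2
    _ = y + (((‖u‖ ^ 2)⁻¹ * ⟪u, x⟫) • u - ((‖u‖ ^ 2)⁻¹ * ⟪u, y⟫) • u) := by abel

end proj

section segadd
variable {E : Type*} [AddCommGroup E] [Module ℝ E]

open Set Pointwise in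
lemma segment_add_segment_parallel (p v u' : E) (α : ℝ) (hα : 0 ≤ α) :
    segment ℝ p (p + α • u') + segment ℝ v (v + u')
      = segment ℝ (p + v) (p + v + (α + 1) • u') := by
  have hmem : ∀ γ : ℝ, 0 ≤ γ → γ ≤ α + 1 →
      p + v + γ • u' ∈ segment ℝ (p + v) (p + v + (α + 1) • u') := by
    intro γ h0 h1
    rw [segment_eq_image']
    refine ⟨γ / (α + 1), ⟨by positivity, by rw [div_le_one (by linarith)]; linarith⟩, ?_⟩
    show p + v + (γ / (α + 1)) • (p + v + (α + 1) • u' - (p + v)) = p + v + γ • u'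
    rw [add_sub_cancel_left, smul_smul, div_mul_cancel₀ _ (by linarith : α + 1 ≠ (0:ℝ))]
  apply Set.Subset.antisymm
  · rw [← convexHull_pair, ← convexHull_pair, ← convexHull_add]
    apply convexHull_min ?_ (convex_segment _ _)
    rintro x hx
    obtain ⟨x₁, hx₁, x₂, hx₂, rfl⟩ := Set.mem_add.1 hx
    have h1 : x₁ = p ∨ x₁ = p + α • u' := by simpa using hx₁
    have h2 : x₂ = v ∨ x₂ = v + u' := by simpa using hx₂
    rcases h1 with h1 | h1 <;> rcases h2 with h2 | h2 <;> rw [h1, h2]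
    · simpa using hmem 0 le_rfl (by linarith)
    · have h3 : p + (v + u') = p + v + (1:ℝ) • u' := by module
      rw [h3]; exact hmem 1 zero_le_one (by linarith)
    · have h3 : p + α • u' + v = p + v + α • u' := by module
      rw [h3]; exact hmem α hα (by linarith)
    · have h3 : p + α • u' + (v + u') = p + v + (α + 1) • u' := by module
      rw [h3]; exact hmem (α + 1) (by linarith) le_rfl
  · have hconv : Convex ℝ (segment ℝ p (p + α • u') + segment ℝ v (v + u')) :=
      (convex_segment _ _).add (convex_segment _ _)
    apply hconv.segment_subset
    · exact Set.add_mem_add (left_mem_segment ℝ _ _) (left_mem_segment ℝ _ _)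
    · have h3 : p + v + (α + 1) • u' = (p + α • u') + (v + u') := by module
      rw [h3]
      exact Set.add_mem_add (right_mem_segment ℝ _ _) (right_mem_segment ℝ _ _)

end segadd

lemma tendsto_affine_aux (a b : ℝ) :
    Filter.Tendsto (fun ε : ℝ => a + ε * b) (nhdsWithin 0 (Set.Ioi 0)) (nhds a) := by
  have h : Filter.Tendsto (fun ε : ℝ => a + ε * b) (nhds 0) (nhds (a + 0 * b)) :=
    (continuous_const.add (continuous_id'.mul continuous_const)).tendsto 0
  simpa using h.mono_left nhdsWithin_le_nhds

open Set Pointwise RealInnerProductSpace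

set_option maxHeartbeats 2000000 in
theorem minkowski_difference_edge_directions {d : ℕ}
    (A B C : Set (EuclideanSpace ℝ (Fin d)))
    (hA : IsPolytope A) (hB : IsPolytope B) (hC : IsPolytope C)
    (hsum : A = B + C) :
    ∀ e, IsEdgeDir C e → IsEdgeDir A e := by
  classical
  obtain ⟨Sb, hSbne, hBeq⟩ := hB
  obtain ⟨Sc, hScne, hCeq⟩ := hC
  rintro e ⟨v, w, ⟨hvw, hext⟩, t, ht, rfl⟩
  set u : EuclideanSpace ℝ (Fin d) := w - v with hu_def
  have hu : u ≠ 0 := sub_ne_zero.2 (Ne.symm hvw)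
  have hu2 : (0:ℝ) < ‖u‖ ^ 2 := pow_pos (norm_pos_iff.2 hu) 2
  have hCconv : Convex ℝ C := hCeq ▸ convex_convexHull ℝ _
  have hsegC : segment ℝ v w ⊆ C := hext.1
  have hvC : v ∈ C := hsegC (left_mem_segment ℝ v w)
  have hwC : w ∈ C := hsegC (right_mem_segment ℝ v w)
  have hwv : w = v + u := by rw [hu_def]; abel
  -- `v` and `w` are among the generators of `C`
  have hvSc : v ∈ Sc := by
    have h1 : IsExtreme ℝ C {v} := hext.trans (seg_extreme_left v w hvw)
    rw [hCeq, isExtreme_singleton] at h1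
    exact extremePoints_convexHull_subset h1
  have hwSc : w ∈ Sc := by
    have h0 : IsExtreme ℝ (segment ℝ v w) {w} := by
      rw [segment_symm]; exact seg_extreme_left w v (Ne.symm hvw)
    have h1 : IsExtreme ℝ C {w} := hext.trans h0
    rw [hCeq, isExtreme_singleton] at h1
    exact extremePoints_convexHull_subset h1
  -- points of `C` on the line through the edge lie on the edge
  have hline : ∀ r : ℝ, v + r • u ∈ C → v + r • u ∈ segment ℝ v w := by
    intro r hr
    have hcan : ∀ r' : ℝ, v + r • u = v + r' • u → r = r' := by
      intro r' hrr
      have := add_left_cancel hrr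
      exact smul_left_injective ℝ hu this
    by_cases h0 : 0 ≤ r
    · by_cases h1 : r ≤ 1
      · rw [segment_eq_image']
        exact ⟨r, ⟨h0, h1⟩, by rw [← hu_def]⟩
      · exfalso
        push_neg at h1
        have hrpos : 0 < r := by linarith
        have hw_open : w ∈ openSegment ℝ v (v + r • u) := by
          rw [openSegment_eq_image']
          refine ⟨1 / r, ⟨by positivity, by rw [div_lt_one hrpos]; linarith⟩, ?_⟩
          show v + (1 / r) • (v + r • u - v) = w
          rw [add_sub_cancel_left, smul_smul, one_div,
            inv_mul_cancel₀ (ne_of_gt hrpos), one_smul, hwv]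
        have h2 := hext.right_mem_of_mem_openSegment hvC hr (right_mem_segment ℝ v w) hw_open
        rw [segment_eq_image'] at h2
        obtain ⟨r', hr', heq⟩ := h2
        have : r = r' := hcan r' (by rw [← heq, hu_def])
        linarith [hr'.2]
    · exfalso
      push_neg at h0
      have hv_open : v ∈ openSegment ℝ (v + r • u) w := by
        rw [openSegment_eq_image']
        refine ⟨-r / (1 - r), ⟨div_pos (by linarith) (by linarith), ?_⟩, ?_⟩
        · rw [div_lt_one (by linarith)]; linarith
        · show v + r • u + (-r / (1 - r)) • (w - (v + r • u)) = v
          have hwsub : w - (v + r • u) = (1 - r) • u := by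
            rw [hwv]; module
          rw [hwsub, smul_smul, div_mul_cancel₀ _ (by linarith : 1 - r ≠ (0:ℝ))]
          module
      have h2 := hext.2 hr hwC (left_mem_segment ℝ v w) hv_open
      rw [segment_eq_image'] at h2
      obtain ⟨r', hr', heq⟩ := h2
      have : r = r' := hcan r' (by rw [← heq, hu_def])
      linarith [hr'.1]
  -- the generators of C off the edge, and on the edge
  set Sc₀ : Finset (EuclideanSpace ℝ (Fin d)) := Sc.filter (fun x => x ∈ segment ℝ v w)
    with hSc₀def
  set Sc₁ : Finset (EuclideanSpace ℝ (Fin d)) := Sc.filter (fun x => x ∉ segment ℝ v w)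
    with hSc₁def
  have hSc₁C : (Sc₁ : Set (EuclideanSpace ℝ (Fin d))) ⊆ C := by
    intro x hx
    rw [hCeq]
    exact subset_convexHull ℝ _ (Finset.mem_coe.2 (Finset.mem_of_mem_filter x (Finset.mem_coe.1 hx)))
  -- separate the projection of `v` from the projections of the off-edge generators
  have hnm : projC u v ∉ (projC u) '' (convexHull ℝ (Sc₁ : Set (EuclideanSpace ℝ (Fin d)))) := by
    rintro ⟨z, hz, hzeq⟩
    have hzC : z ∈ C := convexHull_min hSc₁C hCconv hz
    have hzline : z = v + ((‖u‖ ^ 2)⁻¹ * (⟪u, z⟫ - ⟪u, v⟫)) • u :=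
      eq_add_smul_of_projC_eq hzeq
    have hzseg : z ∈ segment ℝ v w := by
      rw [hzline] at hzC ⊢
      exact hline _ hzC
    have h5 := extreme_convexHull_inter hCconv hext Sc₁ hSc₁C z hzseg hz
    have h6 : (Sc₁ : Set (EuclideanSpace ℝ (Fin d))) ∩ segment ℝ v w = ∅ := by
      ext x
      simp only [Set.mem_inter_iff, Set.mem_empty_iff_false, iff_false, not_and]
      intro hx
      exact (Finset.mem_filter.1 (Finset.mem_coe.1 hx)).2
    rw [h6, convexHull_empty] at h5
    exact h5
  obtain ⟨f, c, hfc, hcf⟩ := geometric_hahn_banach_closed_point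
    ((convex_convexHull ℝ _).linear_image (projC u).toLinearMap)
    ((((Sc₁ : Set (EuclideanSpace ℝ (Fin d))).toFinite.isCompact_convexHull (𝕜 := ℝ)).image
      (projC u).continuous).isClosed) hnm
  set l₁ : EuclideanSpace ℝ (Fin d) →L[ℝ] ℝ := f.comp (projC u) with hl₁def
  have hπseg : ∀ x ∈ segment ℝ v w, projC u x = projC u v := by
    intro x hx
    rw [segment_eq_image'] at hx
    obtain ⟨θ, _, rfl⟩ := hx
    rw [← hu_def, projC_add_smul]
  have hl₁lt : ∀ s ∈ Sc₁, l₁ s < l₁ v := by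
    intro s hs
    have h1 : projC u s ∈ (projC u) '' (convexHull ℝ (Sc₁ : Set (EuclideanSpace ℝ (Fin d)))) :=
      ⟨s, subset_convexHull ℝ _ (Finset.mem_coe.2 hs), rfl⟩
    exact lt_trans (hfc _ h1) hcf
  -- the face of B in direction l₁
  obtain ⟨bm, hbmSb, hbm⟩ := Sb.exists_max_image (fun x => l₁ x) hSbne
  set Mb : ℝ := l₁ bm with hMbdef
  set Sb₀ : Finset (EuclideanSpace ℝ (Fin d)) := Sb.filter (fun x => l₁ x = Mb) with hSb₀def
  have hSb₀ne : Sb₀.Nonempty := ⟨bm, Finset.mem_filter.2 ⟨hbmSb, rfl⟩⟩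
  -- the top point in direction u among projections
  obtain ⟨bq, hbqSb₀, hbq⟩ := Sb₀.exists_max_image (fun x => ‖projC u x‖) hSb₀ne
  set q : EuclideanSpace ℝ (Fin d) := projC u bq with hqdef
  set l₂ : EuclideanSpace ℝ (Fin d) →L[ℝ] ℝ := (innerSL ℝ q).comp (projC u) with hl₂def
  have hl₂app : ∀ x, l₂ x = ⟪q, projC u x⟫ := fun x => rfl
  have hl₂le : ∀ b ∈ Sb₀, l₂ b ≤ ‖q‖ ^ 2 := by
    intro b hb
    have h1 : ‖projC u b‖ ≤ ‖q‖ := hbq b hb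
    have h2 := norm_sub_sq_real q (projC u b)
    have h1' : ‖projC u b‖ ^ 2 ≤ ‖q‖ ^ 2 := pow_le_pow_left₀ (norm_nonneg _) h1 2
    rw [hl₂app]
    nlinarith [sq_nonneg (‖q - projC u b‖)]
  have hl₂eq : ∀ b ∈ Sb₀, l₂ b = ‖q‖ ^ 2 → projC u b = q := by
    intro b hb heq
    have h1 : ‖projC u b‖ ≤ ‖q‖ := hbq b hb
    have h2 := norm_sub_sq_real q (projC u b)
    rw [hl₂app] at heq
    have h1' : ‖projC u b‖ ^ 2 ≤ ‖q‖ ^ 2 := pow_le_pow_left₀ (norm_nonneg _) h1 2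
    have h3 : ‖q - projC u b‖ ^ 2 = 0 := by nlinarith [sq_nonneg (‖q - projC u b‖)]
    have h4 : q - projC u b = 0 := by
      rw [pow_eq_zero_iff (by norm_num : 2 ≠ 0), norm_eq_zero] at h3
      exact h3
    rw [sub_eq_zero] at h4
    exact h4.symm
  -- choose a small positive ε
  have hev : ∀ᶠ ε : ℝ in nhdsWithin 0 (Set.Ioi 0),
      ((∀ s ∈ Sc₁, l₁ s + ε * l₂ s < l₁ v + ε * l₂ v) ∧
       (∀ b ∈ Sb.filter (fun x => ¬ (l₁ x = Mb)), l₁ b + ε * l₂ b < Mb + ε * ‖q‖ ^ 2)) ∧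
       0 < ε := by
    refine Filter.Eventually.and (Filter.Eventually.and ?_ ?_) self_mem_nhdsWithin
    · rw [Filter.eventually_all_finset]
      intro s hs
      exact (tendsto_affine_aux (l₁ s) (l₂ s)).eventually_lt
        (tendsto_affine_aux (l₁ v) (l₂ v)) (hl₁lt s hs)
    · rw [Filter.eventually_all_finset]
      intro b hb
      have hblt : l₁ b < Mb := by
        rcases Finset.mem_filter.1 hb with ⟨hbSb, hbne⟩
        exact lt_of_le_of_ne (hbm b hbSb) hbne
      exact (tendsto_affine_aux (l₁ b) (l₂ b)).eventually_lt
        (tendsto_affine_aux Mb (‖q‖ ^ 2)) hblt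
  obtain ⟨ε, ⟨hεC, hεB⟩, hεpos⟩ := hev.exists
  set l : EuclideanSpace ℝ (Fin d) →L[ℝ] ℝ := l₁ + ε • l₂ with hldef
  have hlapp : ∀ x, l x = l₁ x + ε * l₂ x := by
    intro x
    simp [hldef, ContinuousLinearMap.add_apply, ContinuousLinearMap.smul_apply, smul_eq_mul]
  -- maximum value of l on the generators of C
  have hCseg_val : ∀ x ∈ segment ℝ v w, l x = l₁ v + ε * l₂ v := by
    intro x hx
    rw [hlapp, hl₁def, hl₂def]
    simp only [ContinuousLinearMap.comp_apply]
    rw [hπseg x hx]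
  have hCmax : ∀ s ∈ Sc, l s ≤ l₁ v + ε * l₂ v := by
    intro s hs
    by_cases hseg : s ∈ segment ℝ v w
    · exact le_of_eq (hCseg_val s hseg)
    · rw [hlapp]
      exact le_of_lt (hεC s (Finset.mem_filter.2 ⟨hs, hseg⟩))
  have hCeq_iff : ∀ s ∈ Sc, l s = l₁ v + ε * l₂ v → s ∈ segment ℝ v w := by
    intro s hs hval
    by_contra hseg
    have := hεC s (Finset.mem_filter.2 ⟨hs, hseg⟩)
    rw [← hlapp] at this
    exact absurd hval (ne_of_lt this)
  -- maximum value of l on the generators of B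
  have hBmax : ∀ b ∈ Sb, l b ≤ Mb + ε * ‖q‖ ^ 2 := by
    intro b hb
    by_cases hb0 : l₁ b = Mb
    · rw [hlapp, hb0]
      have := hl₂le b (Finset.mem_filter.2 ⟨hb, hb0⟩)
      nlinarith
    · rw [hlapp]
      exact le_of_lt (hεB b (Finset.mem_filter.2 ⟨hb, hb0⟩))
  have hBeq_iff : ∀ b ∈ Sb, l b = Mb + ε * ‖q‖ ^ 2 → l₁ b = Mb ∧ projC u b = q := by
    intro b hb hval
    by_cases hb0 : l₁ b = Mb
    · refine ⟨hb0, ?_⟩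
      rw [hlapp, hb0] at hval
      have h2 : l₂ b = ‖q‖ ^ 2 := by
        have := mul_left_cancel₀ (ne_of_gt hεpos) (by linarith : ε * l₂ b = ε * ‖q‖ ^ 2)
        exact this
      exact hl₂eq b (Finset.mem_filter.2 ⟨hb, hb0⟩) h2
    · exfalso
      have := hεB b (Finset.mem_filter.2 ⟨hb, hb0⟩)
      rw [← hlapp] at this
      exact absurd hval (ne_of_lt this)
  have hbq_val : l bq = Mb + ε * ‖q‖ ^ 2 := by
    rw [hlapp, (Finset.mem_filter.1 hbqSb₀).2, hl₂app, ← hqdef, real_inner_self_eq_norm_sq]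
  have hv_val : l v = l₁ v + ε * l₂ v := hCseg_val v (left_mem_segment ℝ v w)
  -- A is the hull of the Minkowski sum of generators
  have hAeq : A = convexHull ℝ ((Sb + Sc : Finset (EuclideanSpace ℝ (Fin d))) :
      Set (EuclideanSpace ℝ (Fin d))) := by
    rw [hsum, hBeq, hCeq, Finset.coe_add, convexHull_add]
  have hM : ∀ a ∈ Sb + Sc, l a ≤ (Mb + ε * ‖q‖ ^ 2) + (l₁ v + ε * l₂ v) := by
    intro a ha
    obtain ⟨b, hb, s2, hs2, rfl⟩ := Finset.mem_add.1 ha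
    rw [map_add]
    exact add_le_add (hBmax b hb) (hCmax s2 hs2)
  have hMa : ∃ a ∈ Sb + Sc, l a = (Mb + ε * ‖q‖ ^ 2) + (l₁ v + ε * l₂ v) :=
    ⟨bq + v, Finset.add_mem_add (Finset.mem_of_mem_filter bq hbqSb₀) hvSc,
      by rw [map_add, hbq_val, hv_val]⟩
  have hFace := face_convexHull (Sb + Sc) l ((Mb + ε * ‖q‖ ^ 2) + (l₁ v + ε * l₂ v)) hM hMa
  set T₁ : Finset (EuclideanSpace ℝ (Fin d)) := Sb₀.filter (fun b => projC u b = q)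
    with hT₁def
  have hbqT₁ : bq ∈ T₁ := Finset.mem_filter.2 ⟨hbqSb₀, rfl⟩
  have hT₁val : ∀ b ∈ T₁, l b = Mb + ε * ‖q‖ ^ 2 := by
    intro b hb
    obtain ⟨hbSb₀, hbproj⟩ := Finset.mem_filter.1 hb
    rw [hlapp, (Finset.mem_filter.1 hbSb₀).2, hl₂app, hbproj, real_inner_self_eq_norm_sq]
  have hGen : ((Sb + Sc : Finset (EuclideanSpace ℝ (Fin d))) :
        Set (EuclideanSpace ℝ (Fin d))) ∩
        {x | l x = (Mb + ε * ‖q‖ ^ 2) + (l₁ v + ε * l₂ v)}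
      = (T₁ : Set (EuclideanSpace ℝ (Fin d))) + (Sc₀ : Set (EuclideanSpace ℝ (Fin d))) := by
    ext x
    constructor
    · rintro ⟨hx1, hx2⟩
      obtain ⟨b, hb, s2, hs2, rfl⟩ := Finset.mem_add.1 (Finset.mem_coe.1 hx1)
      have h1 := hBmax b hb
      have h2 := hCmax s2 hs2
      rw [Set.mem_setOf_eq, map_add] at hx2
      have hbv : l b = Mb + ε * ‖q‖ ^ 2 := by linarith
      have hsv : l s2 = l₁ v + ε * l₂ v := by linarith
      obtain ⟨hlb, hproj⟩ := hBeq_iff b hb hbv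
      have hbT₁ : b ∈ T₁ := Finset.mem_filter.2 ⟨Finset.mem_filter.2 ⟨hb, hlb⟩, hproj⟩
      have hsSc₀ : s2 ∈ Sc₀ := Finset.mem_filter.2 ⟨hs2, hCeq_iff s2 hs2 hsv⟩
      exact Set.add_mem_add (Finset.mem_coe.2 hbT₁) (Finset.mem_coe.2 hsSc₀)
    · intro hx
      obtain ⟨b, hb, s2, hs2, rfl⟩ := Set.mem_add.1 hx
      have hbT₁ : b ∈ T₁ := Finset.mem_coe.1 hb
      have hsSc₀ : s2 ∈ Sc₀ := Finset.mem_coe.1 hs2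
      have hbSb : b ∈ Sb := Finset.mem_of_mem_filter b (Finset.mem_of_mem_filter b hbT₁)
      refine ⟨Finset.mem_coe.2 (Finset.add_mem_add hbSb
        (Finset.mem_of_mem_filter s2 hsSc₀)), ?_⟩
      rw [Set.mem_setOf_eq, map_add, hT₁val b hbT₁,
        hCseg_val s2 (Finset.mem_filter.1 hsSc₀).2]
  -- the hull of the edge generators is the edge
  have hSc₀seg : convexHull ℝ (Sc₀ : Set (EuclideanSpace ℝ (Fin d))) = segment ℝ v w := by
    apply Set.Subset.antisymm
    · exact convexHull_min (fun x hx => (Finset.mem_filter.1 (Finset.mem_coe.1 hx)).2)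
        (convex_segment v w)
    · rw [← convexHull_pair]
      apply convexHull_mono
      rintro x hx
      rcases hx with h | h
      · rw [h]
        exact Finset.mem_coe.2 (Finset.mem_filter.2 ⟨hvSc, left_mem_segment ℝ v w⟩)
      · rw [Set.mem_singleton_iff] at h
        rw [h]
        exact Finset.mem_coe.2 (Finset.mem_filter.2 ⟨hwSc, right_mem_segment ℝ v w⟩)
  -- the hull of T₁ is a (possibly degenerate) segment in direction u
  have hT₁q : ∀ x ∈ convexHull ℝ (T₁ : Set (EuclideanSpace ℝ (Fin d))), projC u x = q := by
    intro x hx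
    have hcvx : Convex ℝ ((projC u).toLinearMap ⁻¹' {q}) :=
      (convex_singleton q).linear_preimage (projC u).toLinearMap
    have := convexHull_min
      (fun b hb => by
        show (projC u).toLinearMap b ∈ ({q} : Set (EuclideanSpace ℝ (Fin d)))
        exact (Finset.mem_filter.1 (Finset.mem_coe.1 hb)).2) hcvx hx
    simpa using this
  have hKcompact : IsCompact (convexHull ℝ (T₁ : Set (EuclideanSpace ℝ (Fin d)))) :=
    (T₁ : Set (EuclideanSpace ℝ (Fin d))).toFinite.isCompact_convexHull (𝕜 := ℝ)
  have hKne : (convexHull ℝ (T₁ : Set (EuclideanSpace ℝ (Fin d)))).Nonempty :=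
    ⟨bq, subset_convexHull ℝ _ (Finset.mem_coe.2 hbqT₁)⟩
  have hinncont : Continuous (fun x : EuclideanSpace ℝ (Fin d) => (⟪u, x⟫ : ℝ)) :=
    continuous_const.inner continuous_id'
  obtain ⟨bmin, hbminK, hbminmin⟩ := hKcompact.exists_isMinOn hKne hinncont.continuousOn
  obtain ⟨bmax2, hbmaxK, hbmaxmax⟩ := hKcompact.exists_isMaxOn hKne hinncont.continuousOn
  set α : ℝ := (‖u‖ ^ 2)⁻¹ * (⟪u, bmax2⟫ - ⟪u, bmin⟫) with hαdef
  have hα0 : 0 ≤ α := by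
    have h1 : ⟪u, bmin⟫ ≤ ⟪u, bmax2⟫ := isMinOn_iff.1 hbminmin bmax2 hbmaxK
    have h2 : (0:ℝ) ≤ (‖u‖ ^ 2)⁻¹ := by positivity
    rw [hαdef]
    nlinarith
  have hbmax_eq : bmax2 = bmin + α • u :=
    eq_add_smul_of_projC_eq ((hT₁q bmax2 hbmaxK).trans (hT₁q bmin hbminK).symm)
  have hKseg : convexHull ℝ (T₁ : Set (EuclideanSpace ℝ (Fin d)))
      = segment ℝ bmin (bmin + α • u) := by
    apply Set.Subset.antisymm
    · intro x hx
      have hx1 : x = bmin + ((‖u‖ ^ 2)⁻¹ * (⟪u, x⟫ - ⟪u, bmin⟫)) • u :=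
        eq_add_smul_of_projC_eq ((hT₁q x hx).trans (hT₁q bmin hbminK).symm)
      set β : ℝ := (‖u‖ ^ 2)⁻¹ * (⟪u, x⟫ - ⟪u, bmin⟫) with hβdef
      have hβ0 : 0 ≤ β := by
        have h1 : ⟪u, bmin⟫ ≤ ⟪u, x⟫ := isMinOn_iff.1 hbminmin x hx
        have h2 : (0:ℝ) ≤ (‖u‖ ^ 2)⁻¹ := by positivity
        rw [hβdef]; nlinarith
      have hβα : β ≤ α := by
        have h1 : ⟪u, x⟫ ≤ ⟪u, bmax2⟫ := isMaxOn_iff.1 hbmaxmax x hx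
        have h2 : (0:ℝ) ≤ (‖u‖ ^ 2)⁻¹ := by positivity
        rw [hβdef, hαdef]; nlinarith
      rcases eq_or_lt_of_le hα0 with hα | hα
      · have hβeq : β = 0 := le_antisymm (by rw [← hα] at hβα; exact hβα) hβ0
        rw [hx1, hβeq]
        simp only [zero_smul, add_zero]
        exact left_mem_segment ℝ _ _
      · rw [segment_eq_image']
        refine ⟨β / α, ⟨by positivity, by rw [div_le_one hα]; exact hβα⟩, ?_⟩
        show bmin + (β / α) • (bmin + α • u - bmin) = x
        rw [add_sub_cancel_left, smul_smul, div_mul_cancel₀ _ (ne_of_gt hα), ← hx1]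
    · exact (convex_convexHull ℝ _).segment_subset hbminK (hbmax_eq ▸ hbmaxK)
  -- assemble the face as a segment
  have hexp : IsExposed ℝ A {x ∈ A | ∀ y ∈ A, l y ≤ l x} := fun _ => ⟨l, rfl⟩
  have hFinal : {x ∈ A | ∀ y ∈ A, l y ≤ l x}
      = segment ℝ (bmin + v) (bmin + v + (α + 1) • u) := by
    rw [hAeq, hFace, hGen, convexHull_add, hKseg, hSc₀seg, hwv]
    exact segment_add_segment_parallel bmin v u α hα0
  refine ⟨bmin + v, bmin + v + (α + 1) • u, ⟨?_, hFinal ▸ hexp.isExtreme⟩,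
    t / (α + 1), div_pos ht (by linarith), ?_⟩
  · intro heq
    have : (α + 1) • u = 0 := by
      have := congrArg (fun z => z - (bmin + v)) heq
      simpa using this.symm
    exact absurd this (smul_ne_zero (by linarith) hu)
  · rw [show bmin + v + (α + 1) • u - (bmin + v) = (α + 1) • u by abel, smul_smul,
      div_mul_cancel₀ t (ne_of_gt (by linarith : (0:ℝ) < α + 1)), hu_def]
end

section
/- Let P_1, …, P_r ⊆ ℝ^d be polytopes, let s_1, …, s_r ∈ {−1, +1}, and let P ⊆ ℝ^d be a polytope such that P + Σ_{i : s_i = −1} P_i = Σ_{i : s_i = +1} P_i (Minkowski sums), i.e. P is the signed Minkowski sum s_1 P_1 + ⋯ + s_r P_r. Then every edge direction of P is an edge direction of some summand P_i with s_i = +1; in symbols, D(P) ⊆ ⋃_{i : s_i = +1} D(P_i). -/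
open scoped BigOperators Pointwise

open scoped RealInnerProductSpace

variable {d : ℕ}

local notation "Euc" => EuclideanSpace ℝ (Fin d)

/-- A nonempty compact convex subset of a line is a segment, with endpoints
extremal for the inner product with the direction vector. -/
lemma seg_of_line {u a : Euc} (hu : u ≠ 0) {K : Set Euc} (hK : K.Nonempty)
    (hcomp : IsCompact K) (hconv : Convex ℝ K)
    (hline : ∀ z ∈ K, ∃ t : ℝ, z = a + t • u) :
    ∃ p q, K = segment ℝ p q ∧ (∃ t : ℝ, 0 ≤ t ∧ q - p = t • u) ∧
      ∀ z ∈ K, ⟪u, p⟫ ≤ ⟪u, z⟫ ∧ ⟪u, z⟫ ≤ ⟪u, q⟫ := by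
  have hcont : Continuous fun z : Euc => ⟪u, z⟫ := (innerSL ℝ u).continuous
  obtain ⟨p, hpK, hpmin⟩ := hcomp.exists_isMinOn hK hcont.continuousOn
  obtain ⟨q, hqK, hqmax⟩ := hcomp.exists_isMaxOn hK hcont.continuousOn
  have hu2 : (0:ℝ) < ⟪u, u⟫ := by
    rw [real_inner_self_eq_norm_sq]
    have : 0 < ‖u‖ := norm_pos_iff.2 hu
    positivity
  obtain ⟨tp, hp⟩ := hline p hpK
  obtain ⟨tq, hq⟩ := hline q hqK
  have inner_eq : ∀ t : ℝ, ⟪u, a + t • u⟫ = ⟪u, a⟫ + t * ⟪u, u⟫ := by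
    intro t; rw [inner_add_right, real_inner_smul_right]
  have key : ∀ z ∈ K, ∃ t : ℝ, z = a + t • u ∧ tp ≤ t ∧ t ≤ tq := by
    intro z hz
    obtain ⟨t, ht⟩ := hline z hz
    have h1 : ⟪u, p⟫ ≤ ⟪u, z⟫ := hpmin hz
    have h2 : ⟪u, z⟫ ≤ ⟪u, q⟫ := hqmax hz
    rw [hp, ht, inner_eq, inner_eq] at h1
    rw [ht, hq, inner_eq, inner_eq] at h2
    exact ⟨t, ht, by nlinarith, by nlinarith⟩
  have hpq : tp ≤ tq := by
    obtain ⟨t, ht, h1, h2⟩ := key q hqK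
    have : t = tq := by
      have := ht.symm.trans hq
      have h3 : (t - tq) • u = 0 := by
        have : a + t • u - (a + tq • u) = 0 := by rw [← this]; abel
        rw [← this]; module
      rcases smul_eq_zero.1 h3 with h | h
      · linarith [sub_eq_zero.1 (by linarith [h] : t - tq = (0:ℝ))]
      · exact absurd h hu
    linarith
  have hqp : q - p = (tq - tp) • u := by rw [hp, hq]; module
  refine ⟨p, q, ?_, ⟨tq - tp, by linarith, hqp⟩, fun z hz => ⟨hpmin hz, hqmax hz⟩⟩
  apply Set.Subset.antisymm
  · intro z hz
    obtain ⟨t, ht, h1, h2⟩ := key z hz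
    rcases eq_or_lt_of_le hpq with heq | hlt
    · have : t = tp := le_antisymm (heq ▸ h2) h1
      have : z = p := by rw [ht, hp, this]
      exact this ▸ left_mem_segment ℝ p q
    · rw [segment_eq_image']
      refine ⟨(t - tp) / (tq - tp), ⟨div_nonneg (by linarith) (by linarith), by
        rw [div_le_one (by linarith)]; linarith⟩, ?_⟩
      show p + ((t - tp) / (tq - tp)) • (q - p) = z
      rw [hqp, smul_smul, div_mul_cancel₀ _ (by linarith : tq - tp ≠ 0), ht, hp]
      module
  · exact hconv.segment_subset hpK hqK

/-- The face of a Minkowski sum in a functional direction is the sum of faces. -/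
lemma face_add (A B : Set Euc) (f : Euc →L[ℝ] ℝ) (cA cB : ℝ)
    (hA : ∀ a ∈ A, f a ≤ cA) (hB : ∀ b ∈ B, f b ≤ cB) :
    {x ∈ A + B | f x = cA + cB} = {a ∈ A | f a = cA} + {b ∈ B | f b = cB} := by
  ext x
  constructor
  · rintro ⟨hx, hfx⟩
    obtain ⟨a, ha, b, hb, rfl⟩ := Set.mem_add.1 hx
    rw [map_add] at hfx
    have h1 := hA a ha
    have h2 := hB b hb
    exact Set.mem_add.2 ⟨a, ⟨ha, by linarith⟩, b, ⟨hb, by linarith⟩, rfl⟩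
  · rintro hx
    obtain ⟨a, ⟨ha, hfa⟩, b, ⟨hb, hfb⟩, rfl⟩ := Set.mem_add.1 hx
    exact ⟨Set.add_mem_add ha hb, by rw [map_add, hfa, hfb]⟩

/-- The face of the convex hull of a finite set in a functional direction is the
convex hull of the maximizing generators. -/
lemma face_convexHull_s10 (S : Finset Euc) (f : Euc →L[ℝ] ℝ) (c : ℝ)
    (hc : ∀ s ∈ S, f s ≤ c) [DecidablePred fun s => f s = c] :
    {x ∈ convexHull ℝ (S : Set Euc) | f x = c} =
      convexHull ℝ ((S.filter fun s => f s = c : Finset Euc) : Set Euc) := by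
  apply Set.Subset.antisymm
  · rintro x ⟨hx, hfx⟩
    rw [Finset.convexHull_eq] at hx
    obtain ⟨w, hw0, hw1, hwx⟩ := hx
    have hsum : ∑ y ∈ S, w y * (c - f y) = 0 := by
      have hfx' : f x = ∑ y ∈ S, w y * f y := by
        rw [← hwx, S.centerMass_eq_of_sum_1 _ hw1, map_sum]
        simp [map_smul, smul_eq_mul]
      have : ∑ y ∈ S, w y * c = c := by rw [← Finset.sum_mul, hw1, one_mul]
      calc ∑ y ∈ S, w y * (c - f y) = (∑ y ∈ S, w y * c) - ∑ y ∈ S, w y * f y := by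
            rw [← Finset.sum_sub_distrib]; exact Finset.sum_congr rfl fun y _ => by ring
        _ = 0 := by rw [this, ← hfx', hfx]; ring
    have hall : ∀ y ∈ S, w y * (c - f y) = 0 :=
      (Finset.sum_eq_zero_iff_of_nonneg fun y hy =>
        mul_nonneg (hw0 y hy) (by linarith [hc y hy])).1 hsum
    have hzero : ∀ i ∈ S, i ∉ S.filter (fun s => f s = c) → w i = 0 := by
      intro i hiS hifil
      have hne : f i ≠ c := fun h => hifil (Finset.mem_filter.2 ⟨hiS, h⟩)
      rcases mul_eq_zero.1 (hall i hiS) with h | h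
      · exact h
      · exact absurd (by linarith : f i = c) hne
    rw [← hwx, ← Finset.centerMass_subset (w := w) id (Finset.filter_subset _ S) hzero]
    apply Finset.centerMass_mem_convexHull
    · intro i hi; exact hw0 i (Finset.mem_filter.1 hi).1
    · rw [Finset.sum_subset (Finset.filter_subset _ S) hzero, hw1]; exact one_pos
    · intro i hi; exact Finset.mem_coe.2 hi
  · intro x hx
    have hsub : (S.filter fun s => f s = c : Set Euc) ⊆ {y | f y = c} := by
      intro y hy
      exact (Finset.mem_filter.1 (Finset.mem_coe.1 hy)).2
    refine ⟨convexHull_mono (by exact_mod_cast Finset.filter_subset _ S) hx, ?_⟩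
    exact convexHull_min hsub (convex_hyperplane ⟨map_add f, map_smul f⟩ c) hx

/-- If a point of an extreme set lies in the convex hull of a finite subset of `P`,
some point of that subset lies in the extreme set. -/
lemma extreme_exists_mem {P F : Set Euc} (hconvP : Convex ℝ P) (hPF : IsExtreme ℝ P F)
    (U : Finset Euc) (hU : (U : Set Euc) ⊆ P) {p : Euc} (hpF : p ∈ F)
    (hpc : p ∈ convexHull ℝ (U : Set Euc)) : ∃ x ∈ U, x ∈ F := by
  classical
  rw [Finset.convexHull_eq] at hpc
  obtain ⟨w, hw0, hw1, hwp⟩ := hpc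
  obtain ⟨u0, hu0U, hu0⟩ := Finset.exists_ne_zero_of_sum_ne_zero (hw1.trans_ne one_ne_zero)
  have hu0pos : 0 < w u0 := (hw0 u0 hu0U).lt_of_ne (Ne.symm hu0)
  have hrest : ∑ y ∈ U.erase u0, w y = 1 - w u0 := by
    rw [← hw1, ← Finset.add_sum_erase _ _ hu0U]; ring
  rcases eq_or_lt_of_le (by linarith [Finset.single_le_sum hw0 hu0U, hw1] : w u0 ≤ 1) with heq | hlt
  · -- w u0 = 1, so p = u0
    have hz : ∀ y ∈ U.erase u0, w y = 0 := by
      refine (Finset.sum_eq_zero_iff_of_nonneg fun y hy => hw0 y (Finset.mem_of_mem_erase hy)).1 ?_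
      rw [hrest, heq]; ring
    have : p = u0 := by
      rw [← hwp, U.centerMass_eq_of_sum_1 _ hw1, ← Finset.add_sum_erase _ _ hu0U,
        Finset.sum_eq_zero fun y hy => by rw [hz y hy, zero_smul], heq, one_smul, add_zero]
      rfl
    exact ⟨u0, hu0U, this ▸ hpF⟩
  · set z := (U.erase u0).centerMass w id with hzdef
    have hzP : z ∈ P := by
      refine convexHull_min hU hconvP ?_
      refine Finset.centerMass_mem_convexHull _ (fun y hy => hw0 y (Finset.mem_of_mem_erase hy))
        (by rw [hrest]; linarith) (fun y hy => Finset.mem_coe.2 (Finset.mem_of_mem_erase hy))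
    have hdecomp : w u0 • u0 + (1 - w u0) • z = p := by
      rw [← hwp, hzdef, Finset.centerMass, hrest, U.centerMass_eq_of_sum_1 _ hw1,
        ← Finset.add_sum_erase _ _ hu0U, smul_smul,
        mul_inv_cancel₀ (by linarith : (1:ℝ) - w u0 ≠ 0), one_smul]
      simp
    have hopen : p ∈ openSegment ℝ u0 z := ⟨w u0, 1 - w u0, hu0pos, by linarith, by ring, hdecomp⟩
    exact ⟨u0, hu0U, hPF.2 (hU (Finset.mem_coe.2 hu0U)) hzP hpF hopen⟩

/-- An edge of a polytope is exposed: there is a functional whose face is exactly the edge. -/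
lemma exists_face_functional {S : Finset Euc} {v w : Euc} (hvw : v ≠ w)
    (hext : IsExtreme ℝ (convexHull ℝ (S : Set Euc)) (segment ℝ v w)) :
    ∃ f : Euc →L[ℝ] ℝ, f (w - v) = 0 ∧ (∀ z ∈ convexHull ℝ (S : Set Euc), f z ≤ f v) ∧
      {x ∈ convexHull ℝ (S : Set Euc) | f x = f v} = segment ℝ v w := by
  classical
  set P := convexHull ℝ (S : Set Euc) with hPdef
  have hPconv : Convex ℝ P := convex_convexHull ℝ _
  have hsegP : segment ℝ v w ⊆ P := hext.1
  have hvP : v ∈ P := hsegP (left_mem_segment ℝ v w)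
  have hwP : w ∈ P := hsegP (right_mem_segment ℝ v w)
  set U := S.filter (fun s => s ∉ segment ℝ v w) with hUdef
  set m := v + (2:ℝ)⁻¹ • (w - v) with hmdef
  have hmseg : m ∈ segment ℝ v w := by
    rw [segment_eq_image']
    exact ⟨2⁻¹, ⟨by norm_num, by norm_num⟩, rfl⟩
  -- step 1 : find f with f (w-v) = 0 and f s < f v on U
  have step1 : ∃ f : Euc →L[ℝ] ℝ, f (w - v) = 0 ∧ ∀ s ∈ U, f s < f v := by
    rcases U.eq_empty_or_nonempty with hUe | hUne
    · exact ⟨0, rfl, fun s hs => absurd hs (hUe ▸ Finset.notMem_empty s)⟩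
    set C := convexHull ℝ (U : Set Euc) + ((Submodule.span ℝ {w - v} : Submodule ℝ Euc) : Set Euc)
      with hCdef
    have hCconv : Convex ℝ C :=
      (convex_convexHull ℝ _).add (Submodule.span ℝ {w - v}).convex
    have hCclosed : IsClosed C :=
      IsClosed.add_left_of_isCompact (Submodule.closed_of_finiteDimensional _)
        (U.finite_toSet.isCompact_convexHull ℝ)
    have hUP : (U : Set Euc) ⊆ P := by
      intro x hx
      exact subset_convexHull ℝ _ (Finset.mem_coe.2 (Finset.mem_filter.1 hx).1)
    have hmC : m ∉ C := by
      rintro ⟨y, hy, z, hz, hyz⟩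
      obtain ⟨c, rfl⟩ := Submodule.mem_span_singleton.1 hz
      -- y = m - c • (w - v) = v + (1/2 - c) • (w - v)
      obtain ⟨β, hβ⟩ : ∃ β : ℝ, β = (2:ℝ)⁻¹ - c := ⟨_, rfl⟩
      have hy' : y = v + β • (w - v) := by
        have h0 : y = m - c • (w - v) := by rw [← hyz]; module
        rw [h0, hmdef, hβ]; module
      have hyP : y ∈ P := convexHull_min hUP hPconv hy
      by_cases hyseg : y ∈ segment ℝ v w
      · obtain ⟨x, hxU, hxseg⟩ := extreme_exists_mem hPconv hext U hUP hyseg hy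
        exact (Finset.mem_filter.1 hxU).2 hxseg
      · have hβrange : β < 0 ∨ 1 < β := by
          by_contra hcon
          push_neg at hcon
          exact hyseg (by
            rw [segment_eq_image']
            exact ⟨β, ⟨hcon.1, hcon.2⟩, hy'.symm⟩)
        rcases hβrange with hβn | hβp
        · -- m ∈ openSegment w y
          have hpos : (0:ℝ) < 2 * (1 - β) := by nlinarith
          have hne : (2:ℝ) * (1 - β) ≠ 0 := ne_of_gt hpos
          have hmem : m ∈ openSegment ℝ w y := by
            refine ⟨1 - (2 * (1 - β))⁻¹, (2 * (1 - β))⁻¹, ?_, inv_pos.2 hpos, by ring, ?_⟩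
            · have : (2 * (1 - β))⁻¹ < 1 := by
                rw [inv_lt_one_iff₀]; right; nlinarith
              linarith
            · rw [hy', hmdef]
              match_scalars <;> field_simp [show (1:ℝ) - β ≠ 0 by linarith] <;> ring
          exact hyseg (hext.right_mem_of_mem_openSegment hwP hyP hmseg hmem)
        · -- m ∈ openSegment v y
          have hpos : (0:ℝ) < 2 * β := by nlinarith
          have hne : (2:ℝ) * β ≠ 0 := ne_of_gt hpos
          have hmem : m ∈ openSegment ℝ v y := by
            refine ⟨1 - (2 * β)⁻¹, (2 * β)⁻¹, ?_, inv_pos.2 hpos, by ring, ?_⟩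
            · have : (2 * β)⁻¹ < 1 := by
                rw [inv_lt_one_iff₀]; right; linarith
              linarith
            · rw [hy', hmdef]
              match_scalars <;> field_simp <;> ring
          exact hyseg (hext.right_mem_of_mem_openSegment hvP hyP hmseg hmem)
    obtain ⟨f, u, hfu, hum⟩ := geometric_hahn_banach_closed_point hCconv hCclosed hmC
    obtain ⟨y0, hy0⟩ := hUne
    have hy0C : ∀ t : ℝ, (y0 : Euc) + t • (w - v) ∈ C := by
      intro t
      exact Set.add_mem_add (subset_convexHull ℝ _ (Finset.mem_coe.2 hy0))
        (Submodule.mem_span_singleton.2 ⟨t, rfl⟩)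
    have hfwv : f (w - v) = 0 := by
      by_contra hne
      have := hfu _ (hy0C ((u - f y0) / f (w - v)))
      rw [map_add, map_smul, smul_eq_mul, div_mul_cancel₀ _ hne] at this
      linarith
    have hfm : f m = f v := by
      rw [hmdef, map_add, map_smul, hfwv, smul_eq_mul, mul_zero, add_zero]
    refine ⟨f, hfwv, fun s hs => ?_⟩
    have : f s < u := hfu s (by
      have : (s : Euc) = s + (0:ℝ) • (w - v) := by module
      rw [this]
      exact Set.add_mem_add (subset_convexHull ℝ _ (Finset.mem_coe.2 hs))
        (Submodule.mem_span_singleton.2 ⟨0, rfl⟩))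
    linarith [hum, hfm ▸ hum]
  obtain ⟨f, hfwv, hfU⟩ := step1
  have hfw : f w = f v := by
    have := map_sub f w v
    rw [hfwv] at this
    linarith
  have hfseg : ∀ x ∈ segment ℝ v w, f x = f v := by
    intro x hx
    rw [segment_eq_image'] at hx
    obtain ⟨θ, _, rfl⟩ := hx
    rw [map_add, map_smul, hfwv, smul_eq_mul, mul_zero, add_zero]
  have hSle : ∀ s ∈ S, f s ≤ f v := by
    intro s hs
    by_cases hseg : s ∈ segment ℝ v w
    · exact (hfseg s hseg).le
    · exact (hfU s (Finset.mem_filter.2 ⟨hs, hseg⟩)).le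
  have hPle : ∀ z ∈ P, f z ≤ f v :=
    fun z hz => convexHull_min (fun s hs => hSle s (Finset.mem_coe.1 hs))
      (convex_halfSpace_le ⟨map_add f, map_smul f⟩ (f v)) hz
  refine ⟨f, hfwv, hPle, ?_⟩
  have hface := face_convexHull_s10 S f (f v) hSle
  have hfilter : ((S.filter fun s => f s = f v : Finset Euc) : Set Euc) ⊆ segment ℝ v w := by
    intro x hx
    obtain ⟨hxS, hxf⟩ := Finset.mem_filter.1 (Finset.mem_coe.1 hx)
    by_contra hxseg
    exact absurd hxf (ne_of_lt (hfU x (Finset.mem_filter.2 ⟨hxS, hxseg⟩)))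
  apply Set.Subset.antisymm
  · rw [hface]
    exact convexHull_min hfilter (convex_segment v w)
  · intro x hx
    exact ⟨hsegP hx, hfseg x hx⟩

lemma isPolytope_def {P : Set Euc} (h : ∃ S : Finset Euc, S.Nonempty ∧
    P = convexHull ℝ (S : Set Euc)) : True := trivial

/-- A Minkowski sum of a segment and a polytope has an edge parallel to the segment. -/
lemma edge_of_segment_add_hull : ∀ (n : ℕ) (T : Finset Euc), T.card ≤ n → T.Nonempty →
    ∀ v w : Euc, v ≠ w →
    ∃ p q : Euc, (p ≠ q ∧ IsExtreme ℝ (segment ℝ v w + convexHull ℝ (T : Set Euc))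
        (segment ℝ p q)) ∧ ∃ t : ℝ, 0 < t ∧ q - p = t • (w - v) := by
  classical
  intro n
  induction n with
  | zero =>
    intro T hcard hne
    simp [Finset.card_eq_zero.1 (Nat.le_zero.1 hcard)] at hne
  | succ n ih =>
    intro T hcard hne v w hvw
    have huwv : w - v ≠ 0 := sub_ne_zero.2 (Ne.symm hvw)
    set F := segment ℝ v w + convexHull ℝ (T : Set Euc) with hFdef
    have hFconv : Convex ℝ F := (convex_segment v w).add (convex_convexHull ℝ _)
    have hsegcomp : IsCompact (segment ℝ v w) := by
      rw [← convexHull_pair]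
      exact ((Set.finite_singleton w).insert v).isCompact_convexHull ℝ
    have hFcomp : IsCompact F := hsegcomp.add (T.finite_toSet.isCompact_convexHull ℝ)
    obtain ⟨b0, hb0⟩ := id hne
    by_cases hcase : ∀ a ∈ T, ∀ b ∈ T, ∃ t : ℝ, a - b = t • (w - v)
    · -- the whole sum lies on a line
      have hline : ∀ z ∈ F, ∃ t : ℝ, z = (v + b0) + t • (w - v) := by
        rintro z ⟨x, hx, y, hy, rfl⟩
        rw [segment_eq_image'] at hx
        obtain ⟨θ, _, rfl⟩ := hx
        have hyL : y ∈ {z : Euc | ∃ c : ℝ, z = b0 + c • (w - v)} := by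
          refine convexHull_min ?_ ?_ hy
          · intro a ha
            obtain ⟨t, ht⟩ := hcase a (Finset.mem_coe.1 ha) b0 hb0
            exact ⟨t, by rw [← ht]; abel⟩
          · rintro z1 ⟨c1, rfl⟩ z2 ⟨c2, rfl⟩ s t hs ht hst
            exact ⟨s * c1 + t * c2, by match_scalars <;> linarith⟩
        obtain ⟨c, rfl⟩ := hyL
        exact ⟨θ + c, by module⟩
      obtain ⟨p, q, hFeq, ⟨t, ht0, hqp⟩, -⟩ := seg_of_line huwv
        ⟨v + b0, Set.add_mem_add (left_mem_segment ℝ v w)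
          (subset_convexHull ℝ _ (Finset.mem_coe.2 hb0))⟩ hFcomp hFconv hline
      have hpq : p ≠ q := by
        rintro rfl
        have h1 : v + b0 ∈ segment ℝ v w + convexHull ℝ (T : Set Euc) :=
          Set.add_mem_add (left_mem_segment ℝ v w)
            (subset_convexHull ℝ _ (Finset.mem_coe.2 hb0))
        have h2 : w + b0 ∈ segment ℝ v w + convexHull ℝ (T : Set Euc) :=
          Set.add_mem_add (right_mem_segment ℝ v w)
            (subset_convexHull ℝ _ (Finset.mem_coe.2 hb0))
        rw [hFeq, segment_same] at h1 h2
        exact hvw (by rw [← add_left_inj b0, h1, h2])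
      have htpos : 0 < t := by
        rcases (eq_or_lt_of_le ht0) with h | h
        · exfalso
          apply hpq
          have h0 : q - p = 0 := by rw [hqp, ← h, zero_smul]
          exact (sub_eq_zero.1 h0).symm
        · exact h
      refine ⟨p, q, ⟨hpq, ?_⟩, t, htpos, hqp⟩
      show IsExtreme ℝ (segment ℝ v w + convexHull ℝ (T : Set Euc)) (segment ℝ p q)
      rw [hFeq]
    · push_neg at hcase
      obtain ⟨a, haT, b, hbT, hab⟩ := hcase
      set u : Euc := (a - b) - (⟪w - v, a - b⟫ / ⟪w - v, w - v⟫) • (w - v) with hudef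
      have hwv2 : ⟪w - v, w - v⟫ ≠ 0 := by
        rw [real_inner_self_eq_norm_sq]
        have : 0 < ‖w - v‖ := norm_pos_iff.2 huwv
        positivity
      have hu0 : u ≠ 0 := by
        intro h
        exact hab _ (by rwa [hudef, sub_eq_zero] at h)
      have horth : ⟪u, w - v⟫ = 0 := by
        have h1 : ⟪w - v, u⟫ = 0 := by
          rw [hudef, inner_sub_right, real_inner_smul_right, div_mul_cancel₀ _ hwv2, sub_self]
        rw [real_inner_comm]; exact h1
      set g : Euc →L[ℝ] ℝ := innerSL ℝ u with hgdef
      obtain ⟨b', hb'T, hb'max⟩ := T.exists_max_image (fun s => g s) hne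
      set c := g b' with hcdef
      set T' := T.filter (fun s => g s = c) with hT'def
      have hT'ne : T'.Nonempty := ⟨b', Finset.mem_filter.2 ⟨hb'T, rfl⟩⟩
      have hbnot : b ∉ T' := by
        have hab' : a - b = u + (⟪w - v, a - b⟫ / ⟪w - v, w - v⟫) • (w - v) := by
          rw [hudef]; abel
        have hua : ⟪u, a - b⟫ = ⟪u, u⟫ := by
          nth_rewrite 1 [hab']
          rw [inner_add_right, real_inner_smul_right, horth, mul_zero, add_zero]
        have huu : (0:ℝ) < ⟪u, u⟫ := by
          rw [real_inner_self_eq_norm_sq]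
          have : 0 < ‖u‖ := norm_pos_iff.2 hu0
          positivity
        have hlt : g b < g a := by
          have hgab : g a - g b = ⟪u, a - b⟫ := by
            show ⟪u, a⟫ - ⟪u, b⟫ = ⟪u, a - b⟫
            rw [inner_sub_right]
          have := hua ▸ hgab
          linarith
        intro hmem
        have := (Finset.mem_filter.1 hmem).2
        have hle := hb'max a haT
        rw [this] at hlt
        exact absurd (hb'max a haT) (not_le.2 (by simpa [hcdef] using hlt))
      have hT'card : T'.card ≤ n := by
        have : T'.card < T.card := Finset.card_lt_card
          ⟨Finset.filter_subset _ _, fun hsub => hbnot (hsub hbT)⟩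
        omega
      obtain ⟨p, q, ⟨hpq, hextr'⟩, t, ht, hqp⟩ := ih T' hT'card hT'ne v w hvw
      -- F' is an exposed face of F
      have hgv : ∀ x ∈ segment ℝ v w, g x = g v := by
        intro x hx
        rw [segment_eq_image'] at hx
        obtain ⟨θ, _, rfl⟩ := hx
        rw [map_add, map_smul, smul_eq_mul]
        have : g (w - v) = 0 := horth
        rw [this, mul_zero, add_zero]
      have hsegface : {x ∈ segment ℝ v w | g x = g v} = segment ℝ v w := by
        apply Set.Subset.antisymm (fun x hx => hx.1)
        exact fun x hx => ⟨hx, hgv x hx⟩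
      have hTle : ∀ s ∈ T, g s ≤ c := fun s hs => hb'max s hs
      have hThull_le : ∀ y ∈ convexHull ℝ (T : Set Euc), g y ≤ c :=
        fun y hy => convexHull_min (fun s hs => hTle s (Finset.mem_coe.1 hs))
          (convex_halfSpace_le ⟨map_add g, map_smul g⟩ c) hy
      have hface : {x ∈ F | g x = g v + c} = segment ℝ v w + convexHull ℝ (T' : Set Euc) := by
        rw [hFdef, face_add (segment ℝ v w) (convexHull ℝ (T : Set Euc)) g (g v) c
          (fun x hx => (hgv x hx).le) hThull_le, hsegface, face_convexHull_s10 T g c hTle]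
      have hmax : ∀ y ∈ F, g y ≤ g v + c := by
        rintro y ⟨x1, hx1, y1, hy1, rfl⟩
        rw [map_add]
        exact add_le_add (hgv x1 hx1).le (hThull_le y1 hy1)
      have hexp : IsExposed ℝ F (segment ℝ v w + convexHull ℝ (T' : Set Euc)) := by
        intro _
        refine ⟨g, ?_⟩
        rw [← hface]
        ext x
        constructor
        · rintro ⟨hxF, hxmax⟩
          refine ⟨hxF, fun y hy => ?_⟩
          rw [hxmax]; exact hmax y hy
        · rintro ⟨hxF, hxge⟩
          refine ⟨hxF, le_antisymm (hmax x hxF) ?_⟩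
          have hvb' : v + b' ∈ F := Set.add_mem_add (left_mem_segment ℝ v w)
            (subset_convexHull ℝ _ (Finset.mem_coe.2 hb'T))
          have := hxge _ hvb'
          rw [map_add] at this
          exact le_trans (le_of_eq (by rw [hcdef])) this
      exact ⟨p, q, ⟨hpq, (hexp.isExtreme).trans hextr'⟩, t, ht, hqp⟩

/-- The summand face of an extreme set of a Minkowski sum. -/
lemma summand_face {A B F : Set Euc} (hAconv : Convex ℝ A) (hBconv : Convex ℝ B)
    (hAcomp : IsCompact A) (hBcomp : IsCompact B) (hFclosed : IsClosed F)
    (hFconv : Convex ℝ F) (hext : IsExtreme ℝ (A + B) F)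
    (hexch : ∀ a ∈ A, ∀ b ∈ B, ∀ a' ∈ A, ∀ b' ∈ B,
      a + b ∈ F → a' + b' ∈ F → a + b' ∈ F) :
    Convex ℝ {a ∈ A | ∃ b ∈ B, a + b ∈ F} ∧ IsCompact {a ∈ A | ∃ b ∈ B, a + b ∈ F} ∧
      IsExtreme ℝ A {a ∈ A | ∃ b ∈ B, a + b ∈ F} := by
  refine ⟨?_, ?_, ?_⟩
  · rintro a1 ⟨h1A, b1, h1B, h1F⟩ a2 ⟨h2A, b2, h2B, h2F⟩ s t hs ht hst
    refine ⟨hAconv h1A h2A hs ht hst, s • b1 + t • b2, hBconv h1B h2B hs ht hst, ?_⟩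
    have hmem := hFconv h1F h2F hs ht hst
    have heq : s • (a1 + b1) + t • (a2 + b2) = (s • a1 + t • a2) + (s • b1 + t • b2) := by
      module
    rwa [heq] at hmem
  · have himg : {a ∈ A | ∃ b ∈ B, a + b ∈ F} =
        Prod.fst '' {p : Euc × Euc | (p.1 ∈ A ∧ p.2 ∈ B) ∧ p.1 + p.2 ∈ F} := by
      ext a
      constructor
      · rintro ⟨haA, b, hbB, habF⟩
        exact ⟨(a, b), ⟨⟨haA, hbB⟩, habF⟩, rfl⟩
      · rintro ⟨⟨a', b⟩, ⟨⟨haA, hbB⟩, habF⟩, rfl⟩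
        exact ⟨haA, b, hbB, habF⟩
    rw [himg]
    refine IsCompact.image ?_ continuous_fst
    refine (hAcomp.prod hBcomp).inter_right ?_
    exact hFclosed.preimage (continuous_fst.add continuous_snd)
  · refine ⟨fun a ha => ha.1, ?_⟩
    rintro a1 h1 a2 h2 a ⟨haA, b, hbB, habF⟩ hopen
    obtain ⟨s, t, hs, ht, hst, hsum⟩ := hopen
    have hopen' : a + b ∈ openSegment ℝ (a1 + b) (a2 + b) := by
      refine ⟨s, t, hs, ht, hst, ?_⟩
      rw [← hsum]
      have heq : s • (a1 + b) + t • (a2 + b) = (s • a1 + t • a2) + (s + t) • b := by module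
      rw [heq, hst, one_smul]
    have hF1 := hext.2 (Set.add_mem_add h1 hbB) (Set.add_mem_add h2 hbB) habF hopen'
    exact ⟨h1, b, hbB, hF1⟩

/-- An edge of a Minkowski sum of two polytopes is parallel to an edge of one of the summands. -/
lemma isEdge_add {A B : Set Euc} (hA : IsPolytope A) (hB : IsPolytope B) {x y : Euc}
    (hE : IsEdge (A + B) x y) :
    (∃ p q, IsEdge A p q ∧ ∃ t : ℝ, 0 < t ∧ q - p = t • (y - x)) ∨
    (∃ p q, IsEdge B p q ∧ ∃ t : ℝ, 0 < t ∧ q - p = t • (y - x)) := by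
  obtain ⟨hxy, hext⟩ := hE
  obtain ⟨SA, hSAne, rfl⟩ := hA
  obtain ⟨SB, hSBne, rfl⟩ := hB
  set A := convexHull ℝ (SA : Set Euc) with hAdef
  set B := convexHull ℝ (SB : Set Euc) with hBdef
  have hAconv : Convex ℝ A := convex_convexHull ℝ _
  have hBconv : Convex ℝ B := convex_convexHull ℝ _
  have hAcomp : IsCompact A := SA.finite_toSet.isCompact_convexHull ℝ
  have hBcomp : IsCompact B := SB.finite_toSet.isCompact_convexHull ℝ
  clear_value A B
  set u := y - x with hu
  have hu0 : u ≠ 0 := sub_ne_zero.2 (Ne.symm hxy)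
  have huu : (0:ℝ) < ⟪u, u⟫ := by
    rw [real_inner_self_eq_norm_sq]
    have : 0 < ‖u‖ := norm_pos_iff.2 hu0
    positivity
  set F := segment ℝ x y with hFsegdef
  have hFconv : Convex ℝ F := convex_segment x y
  have hFclosed : IsClosed F := by
    rw [hFsegdef, ← convexHull_pair]
    exact ((Set.finite_singleton y).insert x).isCompact_convexHull ℝ |>.isClosed
  clear_value u F
  -- the exchange property
  have hexch : ∀ a ∈ A, ∀ b ∈ B, ∀ a' ∈ A, ∀ b' ∈ B,
      a + b ∈ F → a' + b' ∈ F → a + b' ∈ F := by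
    intro a ha b hb a' ha' b' hb' hab hab'
    by_cases hcs : a + b' = a' + b
    · have h4 : (a + b) + (a' + b') = (a + b') + (a + b') := by
        rw [show (a + b) + (a' + b') = (a + b') + (a' + b) by abel, ← hcs]
      have h2 : a + b' = (2:ℝ)⁻¹ • (a + b) + (2:ℝ)⁻¹ • (a' + b') := by
        rw [← smul_add, h4]
        match_scalars <;> norm_num
      rw [h2]
      exact hFconv hab hab' (by norm_num) (by norm_num) (by norm_num)
    · have hmemF : (2:ℝ)⁻¹ • (a + b) + (2:ℝ)⁻¹ • (a' + b') ∈ F :=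
        hFconv hab hab' (by norm_num) (by norm_num) (by norm_num)
      have hopen : (2:ℝ)⁻¹ • (a + b) + (2:ℝ)⁻¹ • (a' + b') ∈
          openSegment ℝ (a + b') (a' + b) :=
        ⟨2⁻¹, 2⁻¹, by norm_num, by norm_num, by norm_num, by module⟩
      exact hext.2 (Set.add_mem_add ha hb') (Set.add_mem_add ha' hb) hmemF hopen
  have hxmem : x ∈ F := by rw [hFsegdef]; exact left_mem_segment ℝ x y
  have hymem : y ∈ F := by rw [hFsegdef]; exact right_mem_segment ℝ x y
  have hxAB : x ∈ A + B := hext.1 hxmem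
  obtain ⟨a0, ha0, b0, hb0, hx0⟩ := Set.mem_add.1 hxAB
  have hx0F : a0 + b0 ∈ F := by rw [hx0]; exact hxmem
  have hcoord : ∀ z ∈ F, ∀ z' ∈ F, ∃ t : ℝ, z - z' = t • u := by
    intro z hz z' hz'
    rw [hFsegdef, segment_eq_image'] at hz hz'
    obtain ⟨θ1, -, rfl⟩ := hz
    obtain ⟨θ2, -, rfl⟩ := hz'
    exact ⟨θ1 - θ2, by rw [hu]; module⟩
  obtain ⟨hFAconv, hFAcomp, hFAext⟩ :=
    summand_face hAconv hBconv hAcomp hBcomp hFclosed hFconv hext hexch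
  have hextBA : IsExtreme ℝ (B + A) F := by rwa [add_comm B A]
  have hexchBA : ∀ b ∈ B, ∀ a ∈ A, ∀ b' ∈ B, ∀ a' ∈ A,
      b + a ∈ F → b' + a' ∈ F → b + a' ∈ F := by
    intro b hb a ha b' hb' a' ha' h1 h2
    rw [add_comm] at h1 h2 ⊢
    exact hexch a' ha' b' hb' a ha b hb h2 h1
  obtain ⟨hFBconv, hFBcomp, hFBext⟩ :=
    summand_face hBconv hAconv hBcomp hAcomp hFclosed hFconv hextBA hexchBA
  set FA := {a ∈ A | ∃ b ∈ B, a + b ∈ F} with hFAdef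
  set FB := {b ∈ B | ∃ a ∈ A, b + a ∈ F} with hFBdef
  have hFAne : FA.Nonempty := ⟨a0, ha0, b0, hb0, hx0F⟩
  have hFBne : FB.Nonempty := ⟨b0, hb0, a0, ha0, by rwa [add_comm]⟩
  have lineA : ∀ a ∈ FA, ∃ t : ℝ, a = a0 + t • u := by
    rintro a ⟨haA, b, hbB, habF⟩
    have h1 : a0 + b ∈ F := hexch a0 ha0 b0 hb0 a haA b hbB hx0F habF
    obtain ⟨t, ht⟩ := hcoord (a + b) habF (a0 + b) h1
    have h2 : a - a0 = t • u := by rw [← ht]; abel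
    exact ⟨t, by rw [← h2]; abel⟩
  have lineB : ∀ b ∈ FB, ∃ t : ℝ, b = b0 + t • u := by
    rintro b ⟨hbB, a, haA, hbaF⟩
    have h1 : b0 + a ∈ F := hexchBA b0 hb0 a0 ha0 b hbB a haA (by rwa [add_comm]) hbaF
    have h2 : b + a ∈ F := hbaF
    obtain ⟨t, ht⟩ := hcoord (b + a) h2 (b0 + a) h1
    have h3 : b - b0 = t • u := by rw [← ht]; abel
    exact ⟨t, by rw [← h3]; abel⟩
  obtain ⟨p1, p2, hFAeq, ⟨tA, htA0, hpA⟩, hbndA⟩ :=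
    seg_of_line hu0 hFAne hFAcomp hFAconv lineA
  obtain ⟨q1, q2, hFBeq, ⟨tB, htB0, hpB⟩, hbndB⟩ :=
    seg_of_line hu0 hFBne hFBcomp hFBconv lineB
  have hFAB : F = FA + FB := by
    apply Set.Subset.antisymm
    · intro z hz
      obtain ⟨a, ha, b, hb, rfl⟩ := Set.mem_add.1 (hext.1 hz)
      exact Set.mem_add.2 ⟨a, ⟨ha, b, hb, hz⟩, b, ⟨hb, a, ha, by rwa [add_comm]⟩, rfl⟩
    · rintro z hz
      obtain ⟨a, ⟨haA, bw, hbw, habw⟩, b, ⟨hbB, aw, haw, hbaw⟩, rfl⟩ := Set.mem_add.1 hz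
      exact hexch a haA bw hbw aw haw b hbB habw (by rwa [add_comm] at hbaw)
  have hyx : ⟪u, y⟫ = ⟪u, x⟫ + ⟪u, u⟫ := by
    have h1 : ⟪u, y - x⟫ = ⟪u, u⟫ := by rw [← hu]
    rw [inner_sub_right] at h1
    linarith
  have hsegbnd : ∀ z ∈ F, ⟪u, z⟫ ≤ ⟪u, y⟫ ∧ ⟪u, x⟫ ≤ ⟪u, z⟫ := by
    intro z hz
    rw [hFsegdef, segment_eq_image'] at hz
    obtain ⟨θ, ⟨h0, h1⟩, rfl⟩ := hz
    have hzin : ⟪u, x + θ • (y - x)⟫ = ⟪u, x⟫ + θ * ⟪u, u⟫ := by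
      rw [inner_add_right, real_inner_smul_right, ← hu]
    rw [hzin, hyx]
    constructor <;> nlinarith
  obtain ⟨ay, hay, by', hby, hysum⟩ := Set.mem_add.1 (hFAB ▸ hymem)
  obtain ⟨ax, hax, bx, hbx, hxsum⟩ := Set.mem_add.1 (hFAB ▸ hxmem)
  have hp2FA : p2 ∈ FA := hFAeq ▸ right_mem_segment ℝ p1 p2
  have hp1FA : p1 ∈ FA := hFAeq ▸ left_mem_segment ℝ p1 p2
  have hq2FB : q2 ∈ FB := hFBeq ▸ right_mem_segment ℝ q1 q2
  have hq1FB : q1 ∈ FB := hFBeq ▸ left_mem_segment ℝ q1 q2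
  have hp2q2 : p2 + q2 ∈ F := by rw [hFAB]; exact Set.add_mem_add hp2FA hq2FB
  have hp1q1 : p1 + q1 ∈ F := by rw [hFAB]; exact Set.add_mem_add hp1FA hq1FB
  have hyval : ⟪u, y⟫ = ⟪u, p2⟫ + ⟪u, q2⟫ := by
    have h1 : ⟪u, y⟫ ≤ ⟪u, p2⟫ + ⟪u, q2⟫ := by
      rw [← hysum, inner_add_right]
      exact add_le_add (hbndA ay hay).2 (hbndB by' hby).2
    have h2 : ⟪u, p2 + q2⟫ ≤ ⟪u, y⟫ := (hsegbnd _ hp2q2).1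
    rw [inner_add_right] at h2
    linarith
  have hxval : ⟪u, x⟫ = ⟪u, p1⟫ + ⟪u, q1⟫ := by
    have h1 : ⟪u, p1⟫ + ⟪u, q1⟫ ≤ ⟪u, x⟫ := by
      rw [← hxsum, inner_add_right]
      exact add_le_add (hbndA ax hax).1 (hbndB bx hbx).1
    have h2 : ⟪u, x⟫ ≤ ⟪u, p1 + q1⟫ := (hsegbnd _ hp1q1).2
    rw [inner_add_right] at h2
    linarith
  have hAdiff : ⟪u, p2⟫ - ⟪u, p1⟫ = tA * ⟪u, u⟫ := by
    have h1 : ⟪u, p2 - p1⟫ = tA * ⟪u, u⟫ := by rw [hpA, real_inner_smul_right]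
    rw [inner_sub_right] at h1
    linarith
  have hBdiff : ⟪u, q2⟫ - ⟪u, q1⟫ = tB * ⟪u, u⟫ := by
    have h1 : ⟪u, q2 - q1⟫ = tB * ⟪u, u⟫ := by rw [hpB, real_inner_smul_right]
    rw [inner_sub_right] at h1
    linarith
  have hsum1 : tA + tB = 1 := by
    have h1 : (1:ℝ) * ⟪u, u⟫ = (tA + tB) * ⟪u, u⟫ := by
      rw [hyx] at hyval
      have hexp : (tA + tB) * ⟪u, u⟫ = tA * ⟪u, u⟫ + tB * ⟪u, u⟫ := by ring
      rw [hexp, one_mul]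
      linarith
    exact (mul_right_cancel₀ (ne_of_gt huu) h1).symm
  rcases lt_or_ge 0 tA with htA | htA
  · left
    have hne : p1 ≠ p2 := by
      intro h
      rw [h, sub_self] at hpA
      rcases smul_eq_zero.1 hpA.symm with h' | h'
      · exact (ne_of_gt htA) h'
      · exact hu0 h'
    refine ⟨p1, p2, ⟨hne, ?_⟩, tA, htA, by rw [hpA, hu]⟩
    show IsExtreme ℝ A (segment ℝ p1 p2)
    rw [← hFAeq]
    exact hFAext
  · right
    have htB : 0 < tB := by linarith
    have hne : q1 ≠ q2 := by
      intro h
      rw [h, sub_self] at hpB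
      rcases smul_eq_zero.1 hpB.symm with h' | h'
      · exact (ne_of_gt htB) h'
      · exact hu0 h'
    refine ⟨q1, q2, ⟨hne, ?_⟩, tB, htB, by rw [hpB, hu]⟩
    show IsExtreme ℝ B (segment ℝ q1 q2)
    rw [← hFBeq]
    exact hFBext

lemma IsPolytope.add {A B : Set Euc} (hA : IsPolytope A) (hB : IsPolytope B) :
    IsPolytope (A + B) := by
  classical
  obtain ⟨SA, hSAne, rfl⟩ := hA
  obtain ⟨SB, hSBne, rfl⟩ := hB
  refine ⟨SA + SB, hSAne.add hSBne, ?_⟩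
  rw [Finset.coe_add, convexHull_add]
  

lemma set_zero_eq : (0 : Set Euc) = ({0} : Set Euc) := rfl

lemma isPolytope_zero : IsPolytope (0 : Set Euc) :=
  ⟨{0}, ⟨0, Finset.mem_singleton_self 0⟩, by simp [set_zero_eq]⟩

lemma isPolytope_sum {ι : Type*} (I : Finset ι) (Ps : ι → Set Euc)
    (h : ∀ i ∈ I, IsPolytope (Ps i)) : IsPolytope (∑ i ∈ I, Ps i) :=
  Finset.sum_induction Ps IsPolytope (fun _ _ => IsPolytope.add) isPolytope_zero h

lemma isEdge_finsum {ι : Type*} (I : Finset ι) (Ps : ι → Set Euc)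
    (h : ∀ i ∈ I, IsPolytope (Ps i)) :
    ∀ x y : Euc, IsEdge (∑ i ∈ I, Ps i) x y →
      ∃ i ∈ I, ∃ p q, IsEdge (Ps i) p q ∧ ∃ t : ℝ, 0 < t ∧ q - p = t • (y - x) := by
  classical
  induction I using Finset.induction_on with
  | empty =>
    intro x y hE
    exfalso
    obtain ⟨hxy, hext⟩ := hE
    have hx : x ∈ segment ℝ x y := left_mem_segment ℝ x y
    have hy : y ∈ segment ℝ x y := right_mem_segment ℝ x y
    have h0 : (∑ i ∈ (∅ : Finset ι), Ps i) = ({0} : Set Euc) := by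
      rw [Finset.sum_empty]; exact set_zero_eq
    rw [h0] at hext
    have hx0 := hext.1 hx
    have hy0 := hext.1 hy
    rw [Set.mem_singleton_iff] at hx0 hy0
    exact hxy (hx0.trans hy0.symm)
  | @insert j I hj ih =>
    intro x y hE
    rw [Finset.sum_insert hj] at hE
    rcases isEdge_add (h j (Finset.mem_insert_self j I))
        (isPolytope_sum I Ps fun i hi => h i (Finset.mem_insert_of_mem hi)) hE with
      ⟨p, q, hpq, t, ht, hqp⟩ | ⟨p', q', hpq', t', ht', hqp'⟩
    · exact ⟨j, Finset.mem_insert_self j I, p, q, hpq, t, ht, hqp⟩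
    · obtain ⟨i, hiI, p, q, hpq, τ, hτ, hqpτ⟩ :=
        ih (fun i hi => h i (Finset.mem_insert_of_mem hi)) p' q' hpq'
      refine ⟨i, Finset.mem_insert_of_mem hiI, p, q, hpq, τ * t', mul_pos hτ ht', ?_⟩
      rw [hqpτ, hqp', smul_smul]


theorem signed_minkowski_sum_edge_directions {d r : ℕ}
    (P : Set (EuclideanSpace ℝ (Fin d))) (hP : IsPolytope P)
    (Ps : Fin r → Set (EuclideanSpace ℝ (Fin d))) (hPs : ∀ i, IsPolytope (Ps i))
    (s : Fin r → ℤ) (hs : ∀ i, s i = 1 ∨ s i = -1)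
    (hsigned : P + ∑ i ∈ Finset.univ.filter (fun i => s i = -1), Ps i =
        ∑ i ∈ Finset.univ.filter (fun i => s i = 1), Ps i) :
    ∀ e, IsEdgeDir P e → ∃ i, s i = 1 ∧ IsEdgeDir (Ps i) e := by
  classical
  intro e hdir
  obtain ⟨v, w, ⟨hvw, hextP⟩, t, ht, he⟩ := hdir
  obtain ⟨S, hSne, hPeq⟩ := hP
  rw [hPeq] at hextP
  obtain ⟨f, hfwv, hPle0, hface0⟩ := exists_face_functional hvw hextP
  have hPle : ∀ z ∈ P, f z ≤ f v := by rw [hPeq]; exact hPle0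
  have hface : {x ∈ P | f x = f v} = segment ℝ v w := by rw [hPeq]; exact hface0
  set Qn := ∑ i ∈ Finset.univ.filter (fun i => s i = -1), Ps i with hQndef
  set Rp := ∑ i ∈ Finset.univ.filter (fun i => s i = 1), Ps i with hRpdef
  have hQnP : IsPolytope Qn := isPolytope_sum _ _ (fun i _ => hPs i)
  obtain ⟨TQ, hTQne, hQneq⟩ := hQnP
  obtain ⟨b', hb'T, hb'max⟩ := TQ.exists_max_image (fun z => f z) hTQne
  set c := f b' with hcdef
  have hTQle : ∀ z ∈ TQ, f z ≤ c := hb'max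
  set T0 := TQ.filter (fun z => f z = c) with hT0def
  have hT0ne : T0.Nonempty := ⟨b', Finset.mem_filter.2 ⟨hb'T, rfl⟩⟩
  have hQface : {z ∈ Qn | f z = c} = convexHull ℝ (T0 : Set (EuclideanSpace ℝ (Fin d))) := by
    rw [hQneq, hT0def]
    exact face_convexHull_s10 TQ f c hTQle
  have hQle : ∀ z ∈ Qn, f z ≤ c := by
    rw [hQneq]
    exact fun z hz => convexHull_min (fun a ha => hTQle a (Finset.mem_coe.1 ha))
      (convex_halfSpace_le ⟨map_add f, map_smul f⟩ c) hz
  have hRface : {z ∈ Rp | f z = f v + c} =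
      segment ℝ v w + convexHull ℝ (T0 : Set (EuclideanSpace ℝ (Fin d))) := by
    rw [← hsigned, face_add P Qn f (f v) c hPle hQle, hface, hQface]
  have hRle : ∀ z ∈ Rp, f z ≤ f v + c := by
    rw [← hsigned]
    intro z hz
    obtain ⟨p1, hp1, q1, hq1, rfl⟩ := Set.mem_add.1 hz
    rw [map_add]
    exact add_le_add (hPle p1 hp1) (hQle q1 hq1)
  have hvP : v ∈ P := by
    rw [hPeq]
    exact hextP.1 (left_mem_segment ℝ v w)
  have hb'Qn : b' ∈ Qn := by
    rw [hQneq]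
    exact subset_convexHull ℝ _ (Finset.mem_coe.2 hb'T)
  have hwit : v + b' ∈ Rp := by
    rw [← hsigned]
    exact Set.add_mem_add hvP hb'Qn
  have hexp : IsExposed ℝ Rp
      (segment ℝ v w + convexHull ℝ (T0 : Set (EuclideanSpace ℝ (Fin d)))) := by
    intro _
    refine ⟨f, ?_⟩
    rw [← hRface]
    ext z
    constructor
    · rintro ⟨hz, hfz⟩
      exact ⟨hz, fun y hy => by rw [hfz]; exact hRle y hy⟩
    · rintro ⟨hz, hge⟩
      refine ⟨hz, le_antisymm (hRle z hz) ?_⟩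
      have h1 := hge _ hwit
      rw [map_add] at h1
      exact h1
  have hFRext : IsExtreme ℝ Rp
      (segment ℝ v w + convexHull ℝ (T0 : Set (EuclideanSpace ℝ (Fin d)))) :=
    hexp.isExtreme
  obtain ⟨p, q, ⟨hpq, hpqext⟩, t', ht', hqp⟩ :=
    edge_of_segment_add_hull T0.card T0 le_rfl hT0ne v w hvw
  have hedgeR : IsEdge Rp p q := ⟨hpq, hFRext.trans hpqext⟩
  obtain ⟨i, hiI, p'', q'', hedge'', τ, hτ, hq''⟩ :=
    isEdge_finsum _ Ps (fun i _ => hPs i) p q hedgeR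
  refine ⟨i, (Finset.mem_filter.1 hiI).2, p'', q'', hedge'', t / (τ * t'),
    div_pos ht (mul_pos hτ ht'), ?_⟩
  have hτ0 : τ ≠ 0 := ne_of_gt hτ
  have ht'0 : t' ≠ 0 := ne_of_gt ht'
  rw [he, hq'', hqp, smul_smul, smul_smul]
  congr 1
  field_simp
end

section
/- Let P ⊆ ℝ^d be a polytope with 0 ∈ P, let V ⊆ P be a finite set such that P ⊆ cone(V), and let w ∈ V with w ≠ 0. Suppose that (i) t·w ∉ P for all t > 1 (w is the farthest point of P on the ray {t·w : t ≥ 0}), and (ii) there exists ā ∈ ℝ^d with ā·w = 0, with ā·q ≥ 0 for all q ∈ V, and such that every q ∈ V with ā·q = 0 is a nonnegative scalar multiple of w. Then P ∩ {x ∈ ℝ^d : ā·x = 0} = [0, w], and consequently the segment [0, w] is an edge of P. -/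
open scoped BigOperators RealInnerProductSpace

theorem extremal_ray_gives_edge {d : ℕ}
    (P : Set (EuclideanSpace ℝ (Fin d))) (hP : IsPolytope P)
    (h0 : (0 : EuclideanSpace ℝ (Fin d)) ∈ P)
    (V : Finset (EuclideanSpace ℝ (Fin d)))
    (hVP : (V : Set (EuclideanSpace ℝ (Fin d))) ⊆ P)
    (hPcone : P ⊆ coneOf (V : Set (EuclideanSpace ℝ (Fin d))))
    (w : EuclideanSpace ℝ (Fin d)) (hwV : w ∈ V) (hw0 : w ≠ 0)
    (hfar : ∀ t : ℝ, 1 < t → t • w ∉ P)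
    (a : EuclideanSpace ℝ (Fin d))
    (haw : ⟪a, w⟫ = 0)
    (hanonneg : ∀ q ∈ V, 0 ≤ ⟪a, q⟫)
    (hazero : ∀ q ∈ V, ⟪a, q⟫ = 0 → ∃ t : ℝ, 0 ≤ t ∧ q = t • w) :
    P ∩ {x | ⟪a, x⟫ = 0} = segment ℝ 0 w ∧ IsExtreme ℝ P (segment ℝ 0 w) := by
  obtain ⟨S, hS, hPS⟩ := hP
  have hconv : Convex ℝ P := hPS ▸ convex_convexHull ℝ _
  have hwP : w ∈ P := hVP hwV
  -- key facts about points of P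
  have key : ∀ x ∈ P, 0 ≤ ⟪a, x⟫ ∧ (⟪a, x⟫ = 0 → ∃ s : ℝ, 0 ≤ s ∧ x = s • w) := by
    intro x hx
    obtain ⟨s, c, hsV, hc, rfl⟩ := hPcone hx
    have hinner : ⟪a, ∑ v ∈ s, c v • v⟫ = ∑ v ∈ s, c v * ⟪a, v⟫ := by
      rw [inner_sum]
      exact Finset.sum_congr rfl fun v _ => real_inner_smul_right a v (c v)
    have hterms : ∀ v ∈ s, 0 ≤ c v * ⟪a, v⟫ := fun v hv =>
      mul_nonneg (hc v hv) (hanonneg v (hsV hv))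
    constructor
    · rw [hinner]; exact Finset.sum_nonneg hterms
    · intro h0x
      rw [hinner] at h0x
      have hz := (Finset.sum_eq_zero_iff_of_nonneg hterms).mp h0x
      refine Finset.sum_induction _ (fun y => ∃ t : ℝ, 0 ≤ t ∧ y = t • w)
        (fun y₁ y₂ ⟨t₁, ht₁, e₁⟩ ⟨t₂, ht₂, e₂⟩ =>
          ⟨t₁ + t₂, add_nonneg ht₁ ht₂, by rw [e₁, e₂, add_smul]⟩)
        ⟨0, le_refl 0, by simp⟩ ?_
      intro v hv
      rcases eq_or_ne (c v) 0 with h | h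
      · exact ⟨0, le_refl 0, by simp [h]⟩
      · have hav : ⟪a, v⟫ = 0 := by
          rcases mul_eq_zero.mp (hz v hv) with h' | h'
          · exact absurd h' h
          · exact h'
        obtain ⟨t, ht, hvw⟩ := hazero v (hsV hv) hav
        exact ⟨c v * t, mul_nonneg (hc v hv) ht, by rw [hvw, smul_smul]⟩
  have hseg : P ∩ {x | ⟪a, x⟫ = 0} = segment ℝ 0 w := by
    ext x
    constructor
    · rintro ⟨hxP, hxa⟩
      obtain ⟨t, ht, rfl⟩ := (key x hxP).2 hxa
      have ht1 : t ≤ 1 := by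
        by_contra h
        exact hfar t (lt_of_not_ge h) hxP
      rw [segment_eq_image ℝ (0 : EuclideanSpace ℝ (Fin d)) w]
      exact ⟨t, ⟨ht, ht1⟩, by simp⟩
    · intro hx
      rw [segment_eq_image ℝ (0 : EuclideanSpace ℝ (Fin d)) w] at hx
      obtain ⟨t, ⟨ht0, ht1⟩, rfl⟩ := hx
      constructor
      · have : ((1 - t) • (0 : EuclideanSpace ℝ (Fin d)) + t • w) ∈ P :=
          hconv h0 hwP (by linarith) ht0 (by ring)
        simpa using this
      · show ⟪a, (1 - t) • (0 : EuclideanSpace ℝ (Fin d)) + t • w⟫ = 0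
        rw [inner_add_right, real_inner_smul_right, real_inner_smul_right, haw,
          inner_zero_right]
        ring
  refine ⟨hseg, ?_⟩
  constructor
  · rw [← hseg]; exact Set.inter_subset_left
  · intro x₁ hx₁ x₂ hx₂ x hxseg hxopen
    rw [← hseg] at hxseg
    obtain ⟨u, v, hu, hv, huv, hx⟩ := hxopen
    have h1 := (key x₁ hx₁).1
    have h2 := (key x₂ hx₂).1
    have hxa : ⟪a, x⟫ = 0 := hxseg.2
    have hsum : u * ⟪a, x₁⟫ + v * ⟪a, x₂⟫ = 0 := by
      rw [← hxa, ← hx, inner_add_right, real_inner_smul_right, real_inner_smul_right]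
    have ha1 : ⟪a, x₁⟫ = 0 := by nlinarith
    have ha2 : ⟪a, x₂⟫ = 0 := by nlinarith
    rw [← hseg]
    exact ⟨hx₁, ha1⟩
end
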